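/- arXiv:2101.00242 — 2 statements merged into one kernel-verified Lean document; each statement's English description precedes it below -/
import Mathlib

section
/- Lemma 3.3 (bounds on the scaled r-derivatives). Let (Ū, V̄) be a C¹ solution of system (3.8) on Ω such that R := t·∂_r Ū and S := t·∂_r V̄ extend continuously to Ω ∪ Γ, where Γ = {(t, r̃(t)) : 0 < t ≤ t₀}. Set k₀ = (κ+2)/(κ(1−t₀²)), ε₀ = min{t₀, 1/(4k₀)}, Ω₁ = Ω ∩ {t ≤ ε₀}, Ω₂ = Ω ∩ {t ≥ ε₀}, and suppose the quantity M̄ = 1 + 2·max{ sup_{Ω₂} max(|R|,|S|), sup_Γ max(|R|,|S|) } is finite. Then |R(t,r)| < M̄ and |S(t,r)| < M̄ for every (t,r) ∈ Ω₁. -/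
/-- Partial derivative in the first (t) variable. -/
noncomputable def pdt (f : ℝ × ℝ → ℝ) (p : ℝ × ℝ) : ℝ := fderiv ℝ f p (1, 0)

/-- Partial derivative in the second (r) variable. -/
noncomputable def pdr (f : ℝ × ℝ → ℝ) (p : ℝ × ℝ) : ℝ := fderiv ℝ f p (0, 1)

/-- The characteristic speed λ(t) = √(1−t²)·t²/F(t), F(t) = (1−t²)(κ+1−t²). -/
noncomputable def lam (κ t : ℝ) : ℝ :=
  Real.sqrt (1 - t^2) * t^2 / ((1 - t^2) * (κ + 1 - t^2))

/-- ř(t) = r₀ − ∫ₜ^{t₀} λ(s) ds, the positive characteristic through (t₀,r₀). -/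
noncomputable def rcheck (κ t₀ r₀ t : ℝ) : ℝ := r₀ - ∫ s in t..t₀, lam κ s

/-- The region Ω = {(t,r) : 0 < t ≤ t₀, r̃(t) ≤ r ≤ ř(t)}. -/
def region (κ t₀ r₀ : ℝ) (rt : ℝ → ℝ) : Set (ℝ × ℝ) :=
  {p : ℝ × ℝ | 0 < p.1 ∧ p.1 ≤ t₀ ∧ rt p.1 ≤ p.2 ∧ p.2 ≤ rcheck κ t₀ r₀ p.1}

/-- The linear system (3.8) holding at every point of a set `D`. -/
def Sys38 (κ : ℝ) (Ub Vb : ℝ × ℝ → ℝ) (D : Set (ℝ × ℝ)) : Prop :=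
  ∀ p ∈ D,
    pdt Ub p + lam κ p.1 * pdr Ub p =
      (Ub p - Vb p) / (2 * p.1)
      + ((κ + 2 - p.1^2) * p.1 / (2 * ((1 - p.1^2) * (κ + 1 - p.1^2)))) * (Ub p - Vb p)
      - ((κ + 2 - 2*p.1^2) * p.1 / ((1 - p.1^2) * (κ + 1 - p.1^2))) * Ub p ∧
    pdt Vb p - lam κ p.1 * pdr Vb p =
      (Vb p - Ub p) / (2 * p.1)
      - ((κ + 2 - p.1^2) * p.1 / (2 * ((1 - p.1^2) * (κ + 1 - p.1^2)))) * (Ub p - Vb p)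
      - ((κ + 2 - 2*p.1^2) * p.1 / ((1 - p.1^2) * (κ + 1 - p.1^2))) * Vb p

open Set MeasureTheory intervalIntegral Filter Topology

set_option maxHeartbeats 1000000

noncomputable def aa (κ t : ℝ) : ℝ :=
  (κ + 2 - t^2) * t / (2 * ((1 - t^2) * (κ + 1 - t^2)))
noncomputable def bb (κ t : ℝ) : ℝ :=
  (κ + 2 - 2*t^2) * t / ((1 - t^2) * (κ + 1 - t^2))

open Set MeasureTheory intervalIntegral Filter Topology

lemma lam_contAt {κ : ℝ} (hκ : 0 < κ) {s : ℝ} (hs1 : -1 < s) (hs2 : s < 1) :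
    ContinuousAt (lam κ) s := by
  have h1 : (0:ℝ) < 1 - s^2 := by nlinarith
  have h2 : (0:ℝ) < κ + 1 - s^2 := by nlinarith
  have hden : (1 - s^2) * (κ + 1 - s^2) ≠ 0 := ne_of_gt (mul_pos h1 h2)
  unfold lam
  fun_prop (disch := assumption)

lemma lam_nonneg {κ : ℝ} (hκ : 0 < κ) {s : ℝ} (hs1 : -1 ≤ s) (hs2 : s ≤ 1) :
    0 ≤ lam κ s := by
  unfold lam
  have h1 : (0:ℝ) ≤ 1 - s^2 := by nlinarith
  have h2 : (0:ℝ) ≤ κ + 1 - s^2 := by nlinarith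
  apply div_nonneg
  · positivity
  · exact mul_nonneg h1 h2

lemma lam_pos {κ : ℝ} (hκ : 0 < κ) {s : ℝ} (hs1 : 0 < s) (hs2 : s < 1) :
    0 < lam κ s := by
  unfold lam
  have h1 : (0:ℝ) < 1 - s^2 := by nlinarith
  have h2 : (0:ℝ) < κ + 1 - s^2 := by nlinarith
  apply div_pos
  · have h3 : (0:ℝ) < Real.sqrt (1 - s^2) := Real.sqrt_pos.2 h1
    positivity
  · exact mul_pos h1 h2

lemma lam_contOn {κ : ℝ} (hκ : 0 < κ) : ContinuousOn (lam κ) (Ioo (-1:ℝ) 1) :=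
  fun s hs => (lam_contAt hκ hs.1 hs.2).continuousWithinAt

lemma hasDerivAt_intlam {κ : ℝ} (hκ : 0 < κ) {c s : ℝ}
    (hc : c ∈ Ioo (-1:ℝ) 1) (hs : s ∈ Ioo (-1:ℝ) 1) :
    HasDerivAt (fun x => ∫ u in c..x, lam κ u) (lam κ s) s := by
  apply intervalIntegral.integral_hasDerivAt_right
  · apply ContinuousOn.intervalIntegrable
    exact (lam_contOn hκ).mono (Set.ordConnected_Ioo.uIcc_subset hc hs)
  · exact ⟨Ioo (-1:ℝ) 1, isOpen_Ioo.mem_nhds hs,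
      ((lam_contOn hκ).aestronglyMeasurable measurableSet_Ioo)⟩
  · exact lam_contAt hκ hs.1 hs.2

lemma hasDerivAt_rcheck {κ t₀ r₀ : ℝ} (hκ : 0 < κ) (ht₀ : t₀ ∈ Ioo (0:ℝ) 1)
    {s : ℝ} (hs : s ∈ Ioo (0:ℝ) 1) :
    HasDerivAt (rcheck κ t₀ r₀) (lam κ s) s := by
  have : rcheck κ t₀ r₀ = fun t => r₀ + ∫ u in t₀..t, lam κ u := by
    funext t
    rw [rcheck, intervalIntegral.integral_symm]
    ring
  rw [this]
  exact (hasDerivAt_intlam hκ ⟨lt_trans (by norm_num) ht₀.1, ht₀.2⟩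
    ⟨lt_trans (by norm_num) hs.1, hs.2⟩).const_add r₀

lemma rt_hasDeriv {κ t₀ : ℝ} (hκ : 0 < κ) (ht₀ : t₀ ∈ Ioo (0:ℝ) 1) {rt : ℝ → ℝ}
    (hspace : ∀ t ∈ Set.Ioc (0:ℝ) t₀, lam κ t < deriv rt t)
    {s : ℝ} (hs : s ∈ Set.Ioc (0:ℝ) t₀) :
    HasDerivAt rt (deriv rt s) s ∧ lam κ s < deriv rt s := by
  have hlam : 0 < lam κ s := lam_pos hκ hs.1 (lt_of_le_of_lt hs.2 ht₀.2)
  have hd : DifferentiableAt ℝ rt s := by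
    by_contra hnd
    have h0 := hspace s hs
    rw [deriv_zero_of_not_differentiableAt hnd] at h0
    linarith
  exact ⟨hd.hasDerivAt, hspace s hs⟩

lemma mem_nhds_region {κ t₀ r₀ : ℝ} (hκ : 0 < κ) (ht₀ : t₀ ∈ Ioo (0:ℝ) 1) {rt : ℝ → ℝ}
    (hrtc : ContinuousOn rt (Set.Icc 0 t₀)) {q : ℝ × ℝ}
    (h0 : 0 < q.1) (h1 : q.1 < t₀) (h2 : rt q.1 < q.2) (h3 : q.2 < rcheck κ t₀ r₀ q.1) :
    region κ t₀ r₀ rt ∈ 𝓝 q := by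
  have hrtca : ContinuousAt rt q.1 :=
    hrtc.continuousAt (Icc_mem_nhds (by linarith) (by linarith))
  have hrca : ContinuousAt (rcheck κ t₀ r₀) q.1 :=
    (hasDerivAt_rcheck hκ ht₀ ⟨h0, lt_trans h1 ht₀.2⟩).continuousAt
  have e1 : ∀ᶠ p : ℝ × ℝ in 𝓝 q, 0 < p.1 ∧ p.1 < t₀ := by
    have : ContinuousAt (Prod.fst : ℝ × ℝ → ℝ) q := continuousAt_fst
    filter_upwards [this.eventually_mem (Ioo_mem_nhds h0 h1)] with p hp
    exact ⟨hp.1, hp.2⟩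
  have e2 : ∀ᶠ p : ℝ × ℝ in 𝓝 q, rt p.1 < p.2 := by
    have hc : ContinuousAt (fun p : ℝ × ℝ => p.2 - rt p.1) q :=
      continuousAt_snd.sub (hrtca.comp continuousAt_fst)
    have := hc.eventually_mem (Ioi_mem_nhds (sub_pos.2 h2))
    filter_upwards [this] with p hp
    simpa [sub_pos] using hp
  have e3 : ∀ᶠ p : ℝ × ℝ in 𝓝 q, p.2 < rcheck κ t₀ r₀ p.1 := by
    have hc : ContinuousAt (fun p : ℝ × ℝ => rcheck κ t₀ r₀ p.1 - p.2) q :=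
      (hrca.comp continuousAt_fst).sub continuousAt_snd
    have := hc.eventually_mem (Ioi_mem_nhds (sub_pos.2 h3))
    filter_upwards [this] with p hp
    simpa [sub_pos] using hp
  filter_upwards [e1, e2, e3] with p hp1 hp2 hp3
  exact ⟨hp1.1, le_of_lt hp1.2, le_of_lt hp2, le_of_lt hp3⟩

lemma rcheck_t0 (κ t₀ r₀ : ℝ) : rcheck κ t₀ r₀ t₀ = r₀ := by
  simp [rcheck]

lemma rt_lt_rcheck {κ t₀ r₀ : ℝ} (hκ : 0 < κ) (ht₀ : t₀ ∈ Ioo (0:ℝ) 1) {rt : ℝ → ℝ}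
    (hrtc : ContinuousOn rt (Set.Icc 0 t₀)) (hrtt0 : rt t₀ = r₀)
    (hspace : ∀ t ∈ Set.Ioc (0:ℝ) t₀, lam κ t < deriv rt t)
    {s : ℝ} (hs : s ∈ Ioo (0:ℝ) t₀) : rt s < rcheck κ t₀ r₀ s := by
  set G : ℝ → ℝ := fun u => rt u - rcheck κ t₀ r₀ u with hG
  have hsub : Icc s t₀ ⊆ Ioc (0:ℝ) t₀ := fun x hx => ⟨lt_of_lt_of_le hs.1 hx.1, hx.2⟩
  have hcont : ContinuousOn G (Icc s t₀) := by
    apply ContinuousOn.sub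
    · exact hrtc.mono (fun x hx => ⟨le_of_lt (lt_of_lt_of_le hs.1 hx.1), hx.2⟩)
    · intro x hx
      exact (hasDerivAt_rcheck hκ ht₀
        ⟨lt_of_lt_of_le hs.1 hx.1, lt_of_le_of_lt hx.2 ht₀.2⟩).continuousAt.continuousWithinAt
  have hmono : StrictMonoOn G (Icc s t₀) := by
    apply strictMonoOn_of_deriv_pos (convex_Icc s t₀) hcont
    intro x hx
    rw [interior_Icc] at hx
    have hx' : x ∈ Set.Ioc (0:ℝ) t₀ := ⟨lt_trans hs.1 hx.1, le_of_lt hx.2⟩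
    obtain ⟨hd, hlt⟩ := rt_hasDeriv hκ ht₀ hspace hx'
    have hd2 : HasDerivAt G (deriv rt x - lam κ x) x :=
      hd.sub (hasDerivAt_rcheck hκ ht₀ ⟨hx'.1, lt_of_le_of_lt hx'.2 ht₀.2⟩)
    rw [hd2.deriv]
    linarith
  have := hmono ⟨le_refl s, le_of_lt hs.2⟩ ⟨le_of_lt hs.2, le_refl t₀⟩ hs.2
  have hGt₀ : G t₀ = 0 := by simp [hG, hrtt0, rcheck_t0]
  have : G s < 0 := by linarith [hGt₀ ▸ this]
  simpa [hG, sub_neg] using this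

lemma aa_abs_le {κ t₀ t : ℝ} (hκ : 0 < κ) (ht₀ : t₀ < 1) (ht : 0 < t) (htle : t ≤ t₀) :
    |aa κ t| ≤ ((κ + 2)/(κ * (1 - t₀^2))) * t / 2 := by
  have h0 : (0:ℝ) < t₀ := lt_of_lt_of_le ht htle
  have h1 : (0:ℝ) < 1 - t^2 := by nlinarith
  have h2 : (0:ℝ) < κ + 1 - t^2 := by nlinarith
  have h3 : (0:ℝ) < 1 - t₀^2 := by nlinarith
  have hden : (0:ℝ) < 2 * ((1 - t^2) * (κ + 1 - t^2)) := by positivity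
  have haa : 0 ≤ aa κ t := by
    apply div_nonneg _ (le_of_lt hden)
    nlinarith
  rw [abs_of_nonneg haa, aa, div_le_iff₀ hden]
  have hk : (κ + 2)/(κ * (1 - t₀^2)) * (κ * (1 - t₀^2)) = κ + 2 :=
    div_mul_cancel₀ _ (by positivity)
  have hk0pos : (0:ℝ) < (κ + 2)/(κ * (1 - t₀^2)) := by positivity
  have htt : t^2 ≤ t₀^2 := by nlinarith
  have key : κ * (1 - t₀^2) ≤ (1 - t^2) * (κ + 1 - t^2) := by
    have := mul_le_mul (by linarith : (1 - t₀^2) ≤ (1 - t^2))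
      (by linarith : κ ≤ κ + 1 - t^2) (le_of_lt hκ) (le_of_lt h1)
    linarith [this]
  have key2 := mul_le_mul_of_nonneg_left key (le_of_lt hk0pos)
  nlinarith [mul_le_mul_of_nonneg_right key2 (le_of_lt ht)]

lemma bb_abs_le {κ t₀ t : ℝ} (hκ : 0 < κ) (ht₀ : t₀ < 1) (ht : 0 < t) (htle : t ≤ t₀) :
    |bb κ t| ≤ ((κ + 2)/(κ * (1 - t₀^2))) * t := by
  have h0 : (0:ℝ) < t₀ := lt_of_lt_of_le ht htle
  have h1 : (0:ℝ) < 1 - t^2 := by nlinarith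
  have h2 : (0:ℝ) < κ + 1 - t^2 := by nlinarith
  have h3 : (0:ℝ) < 1 - t₀^2 := by nlinarith
  have hden : (0:ℝ) < (1 - t^2) * (κ + 1 - t^2) := by positivity
  have hbb : 0 ≤ bb κ t := by
    apply div_nonneg _ (le_of_lt hden)
    nlinarith
  rw [abs_of_nonneg hbb, bb, div_le_iff₀ hden]
  have hk : (κ + 2)/(κ * (1 - t₀^2)) * (κ * (1 - t₀^2)) = κ + 2 :=
    div_mul_cancel₀ _ (by positivity)
  have hk0pos : (0:ℝ) < (κ + 2)/(κ * (1 - t₀^2)) := by positivity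
  have htt : t^2 ≤ t₀^2 := by nlinarith
  have key : κ * (1 - t₀^2) ≤ (1 - t^2) * (κ + 1 - t^2) := by
    have := mul_le_mul (by linarith : (1 - t₀^2) ≤ (1 - t^2))
      (by linarith : κ ≤ κ + 1 - t^2) (le_of_lt hκ) (le_of_lt h1)
    linarith [this]
  have key2 := mul_le_mul_of_nonneg_left key (le_of_lt hk0pos)
  nlinarith [mul_le_mul_of_nonneg_right key2 (le_of_lt ht)]
set_option maxHeartbeats 1000000

lemma gronwall_aux (k0 M B' h t₁ ε₀ tst : ℝ)
    (ht0 : 0 < tst) (ht1 : tst < t₁) (ht1e : t₁ ≤ ε₀)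
    (hh : 0 < h) (hM0 : 0 ≤ M) (hB0 : 0 ≤ B')
    (hk0 : 0 < k0) (hsmall : 4 * k0 * ε₀^2 ≤ 1/4)
    (ψ dq α β : ℝ → ℝ)
    (hψc : ContinuousOn ψ (Set.Icc tst t₁)) (hdqc : ContinuousOn dq (Set.Icc tst t₁))
    (hαc : ContinuousOn α (Set.Icc tst t₁)) (hβc : ContinuousOn β (Set.Icc tst t₁))
    (hODE : ∀ s ∈ Set.Ioo tst t₁, HasDerivAt ψ
      ((ψ s - dq s)/(2*s) + α s * (ψ s - dq s) - β s * ψ s) s)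
    (hbnd : ∀ s ∈ Set.Ioo tst t₁, |ψ s| ≤ h * M / s ∧ |dq s| ≤ h * M / s)
    (hαb : ∀ s ∈ Set.Ioo tst t₁, |α s| ≤ k0 * s / 2)
    (hβb : ∀ s ∈ Set.Ioo tst t₁, |β s| ≤ k0 * s)
    (hexit : |ψ t₁| ≤ h * B' / t₁) :
    ∃ θ : ℝ, 0 ≤ θ ∧ θ ≤ 1 ∧
      tst * |ψ tst| ≤ h * (θ * B' + (1 - θ) * (M/3) + M/4) := by
  have ht₁0 : (0:ℝ) < t₁ := lt_trans ht0 ht1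
  have hε₀0 : (0:ℝ) < ε₀ := lt_of_lt_of_le ht₁0 ht1e
  set Wf : ℝ → ℝ := fun s => (ψ s - dq s)/(2*s) + α s * (ψ s - dq s) - β s * ψ s with hWf
  set w : ℝ → ℝ := fun s => s ^ (-(1/2) : ℝ) * ψ s with hw
  set w2 : ℝ → ℝ := fun s => (-(1/2)) * s ^ (-(3/2) : ℝ) * ψ s + s ^ (-(1/2):ℝ) * Wf s with hw2
  set g : ℝ → ℝ := fun s => h * M * (2*k0 * s ^ (-(1/2):ℝ) + (1/2) * s ^ (-(5/2):ℝ)) with hg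
  have hposIcc : ∀ s ∈ Set.Icc tst t₁, (0:ℝ) < s := fun s hs => lt_of_lt_of_le ht0 hs.1
  -- continuity facts
  have hrpowc : ∀ (c : ℝ), ContinuousOn (fun s : ℝ => s ^ (c:ℝ)) (Set.Icc tst t₁) := by
    intro c s hs
    exact (Real.continuousAt_rpow_const s c (Or.inl (ne_of_gt (hposIcc s hs)))).continuousWithinAt
  have hWfc : ContinuousOn Wf (Set.Icc tst t₁) := by
    apply ContinuousOn.sub
    · apply ContinuousOn.add
      · apply ContinuousOn.div (hψc.sub hdqc) (continuousOn_const.mul continuousOn_id)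
        intro s hs
        have := hposIcc s hs; exact mul_ne_zero two_ne_zero (ne_of_gt this)
      · exact hαc.mul (hψc.sub hdqc)
    · exact hβc.mul hψc
  have hwc : ContinuousOn w (Set.Icc tst t₁) := (hrpowc _).mul hψc
  have hw2c : ContinuousOn w2 (Set.Icc tst t₁) :=
    ((continuousOn_const.mul (hrpowc _)).mul hψc).add ((hrpowc _).mul hWfc)
  have hgc : ContinuousOn g (Set.Icc tst t₁) :=
    continuousOn_const.mul ((continuousOn_const.mul (hrpowc _)).add
      (continuousOn_const.mul (hrpowc _)))
  -- derivative of w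
  have hwd : ∀ s ∈ Set.Ioo tst t₁, HasDerivAt w (w2 s) s := by
    intro s hs
    have hs0 : (0:ℝ) < s := lt_trans ht0 hs.1
    have h1 : HasDerivAt (fun x : ℝ => x ^ (-(1/2):ℝ)) ((-(1/2)) * s ^ (-(1/2) - 1 : ℝ)) s :=
      Real.hasDerivAt_rpow_const (Or.inl (ne_of_gt hs0))
    have h2 := h1.mul (hODE s hs)
    have h3 : (-(1/2) - 1 : ℝ) = (-(3/2):ℝ) := by norm_num
    rw [h3] at h2
    exact h2
  -- bound on w2
  have hw2b : ∀ s ∈ Set.Ioo tst t₁, |w2 s| ≤ g s := by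
    intro s hs
    have hs0 : (0:ℝ) < s := lt_trans ht0 hs.1
    obtain ⟨hψs, hdqs⟩ := hbnd s hs
    have hαs := hαb s hs
    have hβs := hβb s hs
    have hr : (0:ℝ) < s ^ (-(1/2):ℝ) := Real.rpow_pos_of_pos hs0 _
    have h35 : s ^ (-(3/2):ℝ) = s ^ (-(1/2):ℝ) / s := by
      rw [show (-(3/2):ℝ) = -(1/2) + (-1) by norm_num, Real.rpow_add hs0, Real.rpow_neg_one]
      ring
    have h55 : s ^ (-(5/2):ℝ) = s ^ (-(1/2):ℝ) / s^2 := by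
      rw [show (-(5/2):ℝ) = -(1/2) + (-1) + (-1) by norm_num, Real.rpow_add hs0,
        Real.rpow_add hs0, Real.rpow_neg_one]
      ring
    have hid : w2 s = s ^ (-(1/2):ℝ) * ((-(dq s))/(2*s) + α s * (ψ s - dq s) - β s * ψ s) := by
      simp only [hw2, hWf, h35]
      field_simp
      ring
    have t2 : |ψ s - dq s| ≤ 2*(h*M/s) := by
      have := abs_sub (ψ s) (dq s)
      linarith
    have e1 : |(-(dq s))/(2*s)| ≤ h*M/(2*s^2) := by
      rw [abs_div, abs_neg, abs_of_pos (by positivity : (0:ℝ) < 2*s)]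
      rw [div_le_div_iff₀ (by positivity) (by positivity)]
      calc |dq s| * (2*s^2) ≤ (h*M/s) * (2*s^2) := by
            apply mul_le_mul_of_nonneg_right hdqs (by positivity)
        _ = h*M*(2*s) := by field_simp
    have e2 : |α s * (ψ s - dq s)| ≤ k0*(h*M) := by
      rw [abs_mul]
      calc |α s| * |ψ s - dq s| ≤ (k0*s/2) * (2*(h*M/s)) := by
            apply mul_le_mul hαs t2 (abs_nonneg _) (by positivity)
        _ = k0*(h*M) := by field_simp
    have e3 : |β s * ψ s| ≤ k0*(h*M) := by
      rw [abs_mul]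
      calc |β s| * |ψ s| ≤ (k0*s) * (h*M/s) := by
            apply mul_le_mul hβs hψs (abs_nonneg _) (by positivity)
        _ = k0*(h*M) := by field_simp
    have inner : |(-(dq s))/(2*s) + α s * (ψ s - dq s) - β s * ψ s|
        ≤ h*M/(2*s^2) + 2*k0*(h*M) := by
      calc |(-(dq s))/(2*s) + α s * (ψ s - dq s) - β s * ψ s|
          ≤ |(-(dq s))/(2*s) + α s * (ψ s - dq s)| + |β s * ψ s| := abs_sub _ _
        _ ≤ |(-(dq s))/(2*s)| + |α s * (ψ s - dq s)| + |β s * ψ s| := by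
            linarith [abs_add_le ((-(dq s))/(2*s)) (α s * (ψ s - dq s))]
        _ ≤ h*M/(2*s^2) + 2*k0*(h*M) := by linarith
    calc |w2 s| = s ^ (-(1/2):ℝ) * |(-(dq s))/(2*s) + α s * (ψ s - dq s) - β s * ψ s| := by
          rw [hid, abs_mul, abs_of_pos hr]
      _ ≤ s ^ (-(1/2):ℝ) * (h*M/(2*s^2) + 2*k0*(h*M)) := by
          apply mul_le_mul_of_nonneg_left inner (le_of_lt hr)
      _ = g s := by simp only [hg, h55]; ring
  -- FTC and integral bound on [tst, t₂] for t₂ < t₁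
  set C₁ : ℝ := h*M*(4*k0*t₁ ^ ((1:ℝ)/2) + (1/3) * tst ^ (-(3/2):ℝ) - (1/3) * t₁ ^ (-(3/2):ℝ))
    with hC₁
  have key : ∀ t₂ ∈ Set.Ioo tst t₁, |w tst| ≤ |w t₂| + C₁ := by
    intro t₂ ht₂
    have ht₂0 : (0:ℝ) < t₂ := lt_trans ht0 ht₂.1
    have hle : tst ≤ t₂ := le_of_lt ht₂.1
    have hsub : Set.Icc tst t₂ ⊆ Set.Icc tst t₁ := Set.Icc_subset_Icc_right (le_of_lt ht₂.2)
    have hIoosub : Set.Ioo tst t₂ ⊆ Set.Ioo tst t₁ := Set.Ioo_subset_Ioo_right (le_of_lt ht₂.2)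
    have hw2int : IntervalIntegrable w2 volume tst t₂ := by
      apply ContinuousOn.intervalIntegrable
      rw [Set.uIcc_of_le hle]
      exact hw2c.mono hsub
    have hgint : IntervalIntegrable g volume tst t₂ := by
      apply ContinuousOn.intervalIntegrable
      rw [Set.uIcc_of_le hle]
      exact hgc.mono hsub
    have hFTC : ∫ s in tst..t₂, w2 s = w t₂ - w tst :=
      intervalIntegral.integral_eq_sub_of_hasDeriv_right_of_le hle (hwc.mono hsub)
        (fun x hx => (hwd x (hIoosub hx)).hasDerivWithinAt) hw2int
    have hbd : |∫ s in tst..t₂, w2 s| ≤ ∫ s in tst..t₂, g s := by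
      have hgnn : 0 ≤ ∫ s in tst..t₂, g s := by
        apply intervalIntegral.integral_nonneg hle
        intro u hu
        have hu0 : (0:ℝ) < u := lt_of_lt_of_le ht0 hu.1
        have r1 : (0:ℝ) ≤ u ^ (-(1/2):ℝ) := Real.rpow_nonneg (le_of_lt hu0) _
        have r2 : (0:ℝ) ≤ u ^ (-(5/2):ℝ) := Real.rpow_nonneg (le_of_lt hu0) _
        simp only [hg]
        positivity
      rw [← Real.norm_eq_abs, ← abs_of_nonneg hgnn]
      apply intervalIntegral.norm_integral_le_abs_of_norm_le _ hgint
      rw [Set.uIoc_of_le hle]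
      apply (MeasureTheory.ae_restrict_iff' measurableSet_Ioc).2
      apply Filter.Eventually.of_forall
      intro x hx
      rw [Real.norm_eq_abs]
      exact hw2b x ⟨hx.1, lt_of_le_of_lt hx.2 ht₂.2⟩
    have i1 : ∫ s in tst..t₂, s ^ (-(1/2):ℝ)
        = (t₂ ^ ((1:ℝ)/2) - tst ^ ((1:ℝ)/2))/(1/2) := by
      rw [integral_rpow (Or.inl (by norm_num))]
      norm_num
    have i2 : ∫ s in tst..t₂, s ^ (-(5/2):ℝ)
        = (t₂ ^ (-(3/2):ℝ) - tst ^ (-(3/2):ℝ))/(-(3/2)) := by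
      rw [integral_rpow (Or.inr ⟨by norm_num, Set.notMem_uIcc_of_lt ht0 ht₂0⟩)]
      norm_num
    have hint1 : IntervalIntegrable (fun s : ℝ => s ^ (-(1/2):ℝ)) volume tst t₂ := by
      apply ContinuousOn.intervalIntegrable
      rw [Set.uIcc_of_le hle]
      exact (hrpowc _).mono hsub
    have hint2 : IntervalIntegrable (fun s : ℝ => s ^ (-(5/2):ℝ)) volume tst t₂ := by
      apply ContinuousOn.intervalIntegrable
      rw [Set.uIcc_of_le hle]
      exact (hrpowc _).mono hsub
    have hgval : ∫ s in tst..t₂, g s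
        = h*M*(2*k0 * ((t₂ ^ ((1:ℝ)/2) - tst ^ ((1:ℝ)/2))/(1/2))
          + (1/2) * ((t₂ ^ (-(3/2):ℝ) - tst ^ (-(3/2):ℝ))/(-(3/2)))) := by
      simp only [hg]
      rw [intervalIntegral.integral_const_mul]
      rw [intervalIntegral.integral_add (hint1.const_mul _) (hint2.const_mul _)]
      rw [intervalIntegral.integral_const_mul, intervalIntegral.integral_const_mul, i1, i2]
    have hmono1 : t₂ ^ ((1:ℝ)/2) ≤ t₁ ^ ((1:ℝ)/2) :=
      Real.rpow_le_rpow (le_of_lt ht₂0) (le_of_lt ht₂.2) (by norm_num)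
    have hmono2 : t₁ ^ (-(3/2):ℝ) ≤ t₂ ^ (-(3/2):ℝ) := by
      rw [Real.rpow_neg (le_of_lt ht₂0), Real.rpow_neg (le_of_lt ht₁0)]
      apply inv_anti₀ (Real.rpow_pos_of_pos ht₂0 _)
      exact Real.rpow_le_rpow (le_of_lt ht₂0) (le_of_lt ht₂.2) (by norm_num)
    have htst1 : (0:ℝ) ≤ tst ^ ((1:ℝ)/2) := le_of_lt (Real.rpow_pos_of_pos ht0 _)
    have hgle : ∫ s in tst..t₂, g s ≤ C₁ := by
      rw [hgval, hC₁]
      have hhM : (0:ℝ) ≤ h*M := by positivity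
      have expand : h*M*(2*k0 * ((t₂ ^ ((1:ℝ)/2) - tst ^ ((1:ℝ)/2))/(1/2))
          + (1/2) * ((t₂ ^ (-(3/2):ℝ) - tst ^ (-(3/2):ℝ))/(-(3/2))))
          = h*M*(4*k0*(t₂ ^ ((1:ℝ)/2) - tst ^ ((1:ℝ)/2))
            + ((1/3) * tst ^ (-(3/2):ℝ) - (1/3) * t₂ ^ (-(3/2):ℝ))) := by ring
      rw [expand]
      apply mul_le_mul_of_nonneg_left _ hhM
      have h4 : (0:ℝ) ≤ 4*k0 := by positivity
      have hd : t₂ ^ ((1:ℝ)/2) - tst ^ ((1:ℝ)/2) ≤ t₁ ^ ((1:ℝ)/2) := by linarith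
      have p1 : 4*k0*(t₂ ^ ((1:ℝ)/2) - tst ^ ((1:ℝ)/2)) ≤ 4*k0*t₁ ^ ((1:ℝ)/2) :=
        mul_le_mul_of_nonneg_left hd h4
      linarith [p1, hmono2]
    have htri : |w tst| - |w t₂| ≤ |w t₂ - w tst| := by
      have := abs_sub_abs_le_abs_sub (w tst) (w t₂)
      rw [abs_sub_comm] at this
      linarith
    rw [← hFTC] at htri
    linarith [le_trans hbd hgle]
  -- pass to the limit t₂ → t₁⁻
  have hwt : |w tst| ≤ |w t₁| + C₁ := by
    have hne : (𝓝[Set.Ioo tst t₁] t₁).NeBot := by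
      apply mem_closure_iff_nhdsWithin_neBot.1
      rw [closure_Ioo (ne_of_lt ht1)]
      exact ⟨le_of_lt ht1, le_refl _⟩
    have hcw : Filter.Tendsto w (𝓝[Set.Ioo tst t₁] t₁) (𝓝 (w t₁)) :=
      ((hwc t₁ ⟨le_of_lt ht1, le_refl _⟩).mono Set.Ioo_subset_Icc_self).tendsto
    have htend : Filter.Tendsto (fun t₂ => |w t₂| + C₁) (𝓝[Set.Ioo tst t₁] t₁)
        (𝓝 (|w t₁| + C₁)) := (hcw.abs).add tendsto_const_nhds
    exact ge_of_tendsto htend (by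
      filter_upwards [self_mem_nhdsWithin] with t₂ ht₂ using key t₂ ht₂)
  -- final assembly
  set a : ℝ := tst ^ ((3:ℝ)/2) with ha
  set b : ℝ := t₁ ^ ((3:ℝ)/2) with hb
  have ha0 : 0 < a := Real.rpow_pos_of_pos ht0 _
  have hb0 : 0 < b := Real.rpow_pos_of_pos ht₁0 _
  have hab : a ≤ b := Real.rpow_le_rpow (le_of_lt ht0) (le_of_lt ht1) (by norm_num)
  -- final assembly
  set a : ℝ := tst ^ ((3:ℝ)/2) with ha
  set b : ℝ := t₁ ^ ((3:ℝ)/2) with hb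
  have ha0 : (0:ℝ) < a := Real.rpow_pos_of_pos ht0 _
  have hb0 : (0:ℝ) < b := Real.rpow_pos_of_pos ht₁0 _
  have hab : a ≤ b := Real.rpow_le_rpow (le_of_lt ht0) (le_of_lt ht1) (by norm_num)
  set θ : ℝ := a * b⁻¹ with hθ
  have hθ0 : (0:ℝ) ≤ θ := by positivity
  have hθ1 : θ ≤ 1 := by
    rw [hθ, ← div_eq_mul_inv]
    exact div_le_one_of_le₀ hab (le_of_lt hb0)
  refine ⟨θ, hθ0, hθ1, ?_⟩
  have e2 : tst ^ (-(3/2):ℝ) = a⁻¹ := by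
    rw [ha, ← Real.rpow_neg (le_of_lt ht0)]
  have e3 : t₁ ^ (-(3/2):ℝ) = b⁻¹ := by
    rw [hb, ← Real.rpow_neg (le_of_lt ht₁0)]
  have e6 : t₁ ^ (-(1/2):ℝ) = b⁻¹ * t₁ := by
    rw [show (-(1/2):ℝ) = -(3/2) + 1 by norm_num, Real.rpow_add ht₁0, Real.rpow_one, e3]
  have e5 : b * t₁ ^ ((1:ℝ)/2) = t₁^2 := by
    rw [hb, ← Real.rpow_add ht₁0, show ((3:ℝ)/2 + 1/2) = ((2:ℕ):ℝ) by norm_num,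
      Real.rpow_natCast]
  have hwtst : |w tst| = tst ^ (-(1/2):ℝ) * |ψ tst| := by
    simp only [hw]
    rw [abs_mul, abs_of_pos (Real.rpow_pos_of_pos ht0 _)]
  have hwt₁ : |w t₁| = t₁ ^ (-(1/2):ℝ) * |ψ t₁| := by
    simp only [hw]
    rw [abs_mul, abs_of_pos (Real.rpow_pos_of_pos ht₁0 _)]
  have ea : a * tst ^ (-(1/2):ℝ) = tst := by
    rw [ha, ← Real.rpow_add ht0, show ((3:ℝ)/2 + -(1/2)) = 1 by norm_num, Real.rpow_one]
  have h1 : tst * |ψ tst| = a * |w tst| := by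
    rw [hwtst, ← mul_assoc, ea]
  have hwt₁b : |w t₁| ≤ t₁ ^ (-(1/2):ℝ) * (h * B' / t₁) := by
    rw [hwt₁]
    exact mul_le_mul_of_nonneg_left hexit (Real.rpow_nonneg (le_of_lt ht₁0) _)
  have hc0 : (0:ℝ) ≤ t₁ ^ ((1:ℝ)/2) := Real.rpow_nonneg (le_of_lt ht₁0) _
  have f4 : 4*k0*(a * t₁ ^ ((1:ℝ)/2)) ≤ 1/4 := by
    have hx1 : a * t₁ ^ ((1:ℝ)/2) ≤ b * t₁ ^ ((1:ℝ)/2) := mul_le_mul_of_nonneg_right hab hc0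
    rw [e5] at hx1
    have hx2 : t₁^2 ≤ ε₀^2 := by nlinarith
    calc 4*k0*(a * t₁ ^ ((1:ℝ)/2)) ≤ 4*k0*(t₁^2) :=
          mul_le_mul_of_nonneg_left hx1 (by positivity)
      _ ≤ 4*k0*ε₀^2 := mul_le_mul_of_nonneg_left hx2 (by positivity)
      _ ≤ 1/4 := hsmall
  have hLHS : a * (t₁ ^ (-(1/2):ℝ) * (h * B' / t₁) + C₁)
      = h * (θ * B') + h*(M/3)*(1-θ) + h*M*(4*k0*(a * t₁ ^ ((1:ℝ)/2))) := by
    rw [hC₁, e6, e2, e3, hθ]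
    field_simp
    ring
  have main : tst * |ψ tst| ≤ a * (t₁ ^ (-(1/2):ℝ) * (h * B' / t₁) + C₁) := by
    rw [h1]
    apply mul_le_mul_of_nonneg_left _ (le_of_lt ha0)
    linarith [hwt₁b]
  rw [hLHS] at main
  have flast : h*M*(4*k0*(a * t₁ ^ ((1:ℝ)/2))) ≤ h*M*(1/4) :=
    mul_le_mul_of_nonneg_left f4 (by positivity)
  calc tst * |ψ tst| ≤ h * (θ * B') + h*(M/3)*(1-θ) + h*M*(4*k0*(a * t₁ ^ ((1:ℝ)/2))) := main
    _ ≤ h * (θ * B') + h*(M/3)*(1-θ) + h*M*(1/4) := by linarith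
    _ = h * (θ * B' + (1 - θ) * (M/3) + M/4) := by ring


lemma aa_contAt {κ : ℝ} (hκ : 0 < κ) {s : ℝ} (hs1 : -1 < s) (hs2 : s < 1) :
    ContinuousAt (aa κ) s := by
  have h1 : (0:ℝ) < 1 - s^2 := by nlinarith
  have h2 : (0:ℝ) < κ + 1 - s^2 := by nlinarith
  have hden : 2 * ((1 - s^2) * (κ + 1 - s^2)) ≠ 0 := by positivity
  unfold aa
  fun_prop (disch := assumption)

lemma bb_contAt {κ : ℝ} (hκ : 0 < κ) {s : ℝ} (hs1 : -1 < s) (hs2 : s < 1) :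
    ContinuousAt (bb κ) s := by
  have h1 : (0:ℝ) < 1 - s^2 := by nlinarith
  have h2 : (0:ℝ) < κ + 1 - s^2 := by nlinarith
  have hden : (1 - s^2) * (κ + 1 - s^2) ≠ 0 := by positivity
  unfold bb
  fun_prop (disch := assumption)

lemma core_bound (κ t₀ r₀ : ℝ) (hκ : 0 < κ) (ht₀ : t₀ ∈ Set.Ioo (0:ℝ) 1)
    (rt : ℝ → ℝ) (hrtc : ContinuousOn rt (Set.Icc 0 t₀)) (hrtt0 : rt t₀ = r₀)
    (hspace : ∀ t ∈ Set.Ioc (0:ℝ) t₀, lam κ t < deriv rt t)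
    (P Q : ℝ × ℝ → ℝ)
    (hPC1 : ContDiffOn ℝ 1 P (region κ t₀ r₀ rt))
    (hQC1 : ContDiffOn ℝ 1 Q (region κ t₀ r₀ rt))
    (σ : ℝ) (hσ : σ = 1 ∨ σ = -1)
    (heq : ∀ q ∈ region κ t₀ r₀ rt, pdt P q + σ * lam κ q.1 * pdr P q
       = (P q - Q q)/(2*q.1) + aa κ q.1 * (P q - Q q) - bb κ q.1 * P q)
    (RP : ℝ × ℝ → ℝ) (hRPdef : ∀ q, RP q = q.1 * pdr P q)
    (hRPcont : ContinuousOn RP (region κ t₀ r₀ rt ∪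
      {p : ℝ × ℝ | ∃ t ∈ Set.Ioc (0:ℝ) t₀, p = (t, rt t)}))
    (ε₀ : ℝ) (hε₀pos : 0 < ε₀) (hε₀le : ε₀ ≤ t₀)
    (k0 : ℝ) (hk0pos : 0 < k0)
    (haabd : ∀ s : ℝ, 0 < s → s ≤ t₀ → |aa κ s| ≤ k0 * s / 2)
    (hbbbd : ∀ s : ℝ, 0 < s → s ≤ t₀ → |bb κ s| ≤ k0 * s)
    (hsmall : 4 * k0 * ε₀^2 ≤ 1/4)
    (M B : ℝ) (hM0 : 0 ≤ M) (hB0 : 0 ≤ B)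
    (p : ℝ × ℝ) (hp0 : 0 < p.1) (hpε : p.1 < ε₀)
    (hpl : rt p.1 < p.2) (hpr : p.2 < rcheck κ t₀ r₀ p.1)
    (hMbound : ∀ q ∈ region κ t₀ r₀ rt, p.1 ≤ q.1 → q.1 ≤ ε₀ →
        |q.1 * pdr P q| ≤ M ∧ |q.1 * pdr Q q| ≤ M)
    (hBtop : ∀ q ∈ region κ t₀ r₀ rt, q.1 = ε₀ → |q.1 * pdr P q| ≤ B)
    (hBΓ : ∀ t ∈ Set.Ioc (0:ℝ) t₀, |RP (t, rt t)| ≤ B) :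
    |RP p| ≤ max B (M/3) + M/4 := by
  obtain ⟨ht₀0, ht₀1⟩ := ht₀
  have hpt₀ : p.1 < t₀ := lt_of_lt_of_le hpε hε₀le
  have hε₀1 : ε₀ < 1 := lt_of_le_of_lt hε₀le ht₀1
  -- the characteristic through p
  set X : ℝ → ℝ := fun s => p.2 + σ * ∫ u in p.1..s, lam κ u with hX
  have hmemIoo : ∀ s : ℝ, 0 < s → s ≤ ε₀ → s ∈ Set.Ioo (-1:ℝ) 1 := fun s h1 h2 =>
    ⟨by linarith, lt_of_le_of_lt h2 hε₀1⟩
  have hp1mem : p.1 ∈ Set.Ioo (-1:ℝ) 1 := hmemIoo _ hp0 (le_of_lt hpε)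
  have hXd : ∀ s : ℝ, 0 < s → s ≤ ε₀ → HasDerivAt X (σ * lam κ s) s := by
    intro s h1 h2
    exact ((hasDerivAt_intlam hκ hp1mem (hmemIoo s h1 h2)).const_mul σ).const_add p.2
  have hXp : X p.1 = p.2 := by simp [hX]
  have hXc : ∀ s : ℝ, 0 < s → s ≤ ε₀ → ContinuousAt X s :=
    fun s h1 h2 => (hXd s h1 h2).continuousAt
  have hIccsub : Set.Icc p.1 ε₀ ⊆ Set.Icc 0 t₀ :=
    fun x hx => ⟨le_trans (le_of_lt hp0) hx.1, le_trans hx.2 hε₀le⟩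
  -- G = X - rt strictly decreasing on [p.1, ε₀]
  set G : ℝ → ℝ := fun s => X s - rt s with hG
  have hGc : ContinuousOn G (Set.Icc p.1 ε₀) := by
    intro s hs
    exact ((hXc s (lt_of_lt_of_le hp0 hs.1) hs.2).continuousWithinAt).sub
      ((hrtc.mono hIccsub) s hs)
  have hGanti : StrictAntiOn G (Set.Icc p.1 ε₀) := by
    apply strictAntiOn_of_deriv_neg (convex_Icc _ _) hGc
    intro x hx
    rw [interior_Icc] at hx
    have hx1 : (0:ℝ) < x := lt_trans hp0 hx.1
    have hx2 : x ∈ Set.Ioc (0:ℝ) t₀ := ⟨hx1, le_trans (le_of_lt hx.2) hε₀le⟩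
    obtain ⟨hdrt, hlt⟩ := rt_hasDeriv hκ ⟨ht₀0, ht₀1⟩ hspace hx2
    have hd : HasDerivAt G (σ * lam κ x - deriv rt x) x :=
      (hXd x hx1 (le_of_lt hx.2)).sub hdrt
    rw [hd.deriv]
    have hlam0 : 0 ≤ lam κ x :=
      lam_nonneg hκ (by linarith) (le_of_lt (hmemIoo x hx1 (le_of_lt hx.2)).2)
    have hσl : σ * lam κ x ≤ lam κ x := by
      rcases hσ with h|h <;> rw [h] <;> nlinarith
    linarith
  have hGp : 0 < G p.1 := by
    simp only [hG, hXp]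
    linarith
  -- D = rcheck - X is monotone nondecreasing on [p.1, ε₀]
  set DD : ℝ → ℝ := fun s => rcheck κ t₀ r₀ s - X s with hDD
  have hDc : ContinuousOn DD (Set.Icc p.1 ε₀) := by
    intro s hs
    have h1 : (0:ℝ) < s := lt_of_lt_of_le hp0 hs.1
    exact (((hasDerivAt_rcheck hκ ⟨ht₀0, ht₀1⟩
      ⟨h1, lt_of_le_of_lt hs.2 hε₀1⟩).continuousAt).continuousWithinAt).sub
      ((hXc s h1 hs.2).continuousWithinAt)
  have hDmono : MonotoneOn DD (Set.Icc p.1 ε₀) := by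
    apply monotoneOn_of_deriv_nonneg (convex_Icc _ _) hDc
    · intro x hx
      rw [interior_Icc] at hx
      have hx1 : (0:ℝ) < x := lt_trans hp0 hx.1
      exact (((hasDerivAt_rcheck hκ ⟨ht₀0, ht₀1⟩
        ⟨hx1, lt_trans hx.2 hε₀1⟩).sub
        (hXd x hx1 (le_of_lt hx.2))).differentiableAt).differentiableWithinAt
    · intro x hx
      rw [interior_Icc] at hx
      have hx1 : (0:ℝ) < x := lt_trans hp0 hx.1
      have hd : HasDerivAt DD (lam κ x - σ * lam κ x) x :=
        (hasDerivAt_rcheck hκ ⟨ht₀0, ht₀1⟩ ⟨hx1, lt_trans hx.2 hε₀1⟩).sub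
          (hXd x hx1 (le_of_lt hx.2))
      rw [hd.deriv]
      have hlam0 : 0 ≤ lam κ x :=
        lam_nonneg hκ (by linarith) (le_of_lt (hmemIoo x hx1 (le_of_lt hx.2)).2)
      rcases hσ with h|h <;> rw [h] <;> nlinarith
  set dstar : ℝ := rcheck κ t₀ r₀ p.1 - p.2 with hds
  have hdstar : 0 < dstar := by rw [hds]; linarith
  have hDlow : ∀ s ∈ Set.Icc p.1 ε₀, dstar ≤ DD s := by
    intro s hs
    have h1 := hDmono ⟨le_refl _, le_of_lt hpε⟩ hs hs.1
    have h2 : DD p.1 = dstar := by simp only [hDD, hXp, hds]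
    linarith
  -- differentiability helpers
  have hreg_of : ∀ q : ℝ × ℝ, 0 < q.1 → q.1 < t₀ → rt q.1 < q.2 → q.2 < rcheck κ t₀ r₀ q.1 →
      q ∈ region κ t₀ r₀ rt :=
    fun q a b c d => ⟨a, le_of_lt b, le_of_lt c, le_of_lt d⟩
  have hfderiv : ∀ F : ℝ × ℝ → ℝ, ContDiffOn ℝ 1 F (region κ t₀ r₀ rt) →
      ∀ q : ℝ × ℝ, 0 < q.1 → q.1 < t₀ → rt q.1 < q.2 → q.2 < rcheck κ t₀ r₀ q.1 →
      HasFDerivAt F (fderiv ℝ F q) q := by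
    intro F hF q a b c d
    have hq : region κ t₀ r₀ rt ∈ 𝓝 q := mem_nhds_region hκ ⟨ht₀0, ht₀1⟩ hrtc a b c d
    exact (((hF.differentiableOn one_ne_zero) q (mem_of_mem_nhds hq)).differentiableAt hq).hasFDerivAt
  have hvert : ∀ F : ℝ × ℝ → ℝ, ContDiffOn ℝ 1 F (region κ t₀ r₀ rt) →
      ∀ s x u : ℝ, 0 < s → s < t₀ → rt s < x + u → x + u < rcheck κ t₀ r₀ s →
      HasDerivAt (fun v => F (s, x + v)) (pdr F (s, x + u)) u := by
    intro F hF s x u a b c d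
    have hc : HasDerivAt (fun v : ℝ => ((s, x + v) : ℝ × ℝ)) (0, 1) u :=
      HasDerivAt.prodMk (hasDerivAt_const u s) ((hasDerivAt_id u).const_add x)
    exact (hfderiv F hF (s, x + u) a b c d).comp_hasDerivAt u hc
  have hhoriz : ∀ F : ℝ × ℝ → ℝ, ContDiffOn ℝ 1 F (region κ t₀ r₀ rt) →
      ∀ u s : ℝ, 0 < s → s ≤ ε₀ → s < t₀ → rt s < X s + u → X s + u < rcheck κ t₀ r₀ s →
      HasDerivAt (fun v => F (v, X v + u))
        (pdt F (s, X s + u) + σ * lam κ s * pdr F (s, X s + u)) s := by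
    intro F hF u s a a2 b c d
    have hcurve : HasDerivAt (fun v : ℝ => ((v, X v + u) : ℝ × ℝ)) (1, σ * lam κ s) s :=
      HasDerivAt.prodMk (hasDerivAt_id s) ((hXd s a a2).add_const u)
    have h2 := (hfderiv F hF (s, X s + u) a b c d).comp_hasDerivAt s hcurve
    have h3 : fderiv ℝ F (s, X s + u) (1, σ * lam κ s)
        = pdt F (s, X s + u) + σ * lam κ s * pdr F (s, X s + u) := by
      have hsplit : ((1:ℝ), σ * lam κ s) = ((1:ℝ), (0:ℝ)) + (σ * lam κ s) • ((0:ℝ), (1:ℝ)) := by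
        simp [Prod.ext_iff]
      rw [hsplit, map_add, _root_.map_smul, smul_eq_mul]
      rfl
    rw [h3] at h2
    exact h2
  have hMVT : ∀ F : ℝ × ℝ → ℝ, ContDiffOn ℝ 1 F (region κ t₀ r₀ rt) →
      ∀ s x hh C : ℝ, 0 ≤ hh → 0 ≤ C →
      (∀ u : ℝ, 0 ≤ u → u ≤ hh → 0 < s ∧ s < t₀ ∧ rt s < x + u ∧ x + u < rcheck κ t₀ r₀ s) →
      (∀ u : ℝ, 0 ≤ u → u ≤ hh → |pdr F (s, x + u)| ≤ C) →
      |F (s, x + hh) - F (s, x)| ≤ C * hh := by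
    intro F hF s x hh C hh0 hC0 hcond hbd
    have key := Convex.norm_image_sub_le_of_norm_hasDerivWithin_le
      (f := fun u => F (s, x + u)) (f' := fun u => pdr F (s, x + u)) (s := Set.Icc 0 hh)
      (fun u hu => (hvert F hF s x u (hcond u hu.1 hu.2).1 (hcond u hu.1 hu.2).2.1
        (hcond u hu.1 hu.2).2.2.1 (hcond u hu.1 hu.2).2.2.2).hasDerivWithinAt)
      (fun u hu => by rw [Real.norm_eq_abs]; exact hbd u hu.1 hu.2)
      (convex_Icc _ _) (Set.left_mem_Icc.2 hh0) (Set.right_mem_Icc.2 hh0)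
    rw [Real.norm_eq_abs, Real.norm_eq_abs, sub_zero, abs_of_nonneg hh0] at key
    simpa using key
  -- exit time and exit estimate
  obtain ⟨t₁, hpt₁, ht₁ε, ht₁t₀, hGt₁0, hGpos, hexit⟩ :
      ∃ t₁ : ℝ, p.1 < t₁ ∧ t₁ ≤ ε₀ ∧ t₁ < t₀ ∧ 0 ≤ G t₁ ∧
        (∀ s, p.1 ≤ s → s < t₁ → 0 < G s) ∧
        (∀ δ : ℝ, 0 < δ → ∃ h₀ : ℝ, 0 < h₀ ∧ h₀ ≤ dstar/2 ∧ ∀ h : ℝ, 0 < h → h ≤ h₀ →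
          |P (t₁, X t₁ + h) - P (t₁, X t₁)| ≤ h * (B + δ) / t₁) := by
    rcases le_or_gt (G ε₀) 0 with hcase | hcase
    · -- Γ exit
      obtain ⟨t₁, ht₁mem, hGt₁⟩ :=
        intermediate_value_Icc' (le_of_lt hpε) hGc ⟨hcase, le_of_lt hGp⟩
      have hpt₁ : p.1 < t₁ := by
        rcases eq_or_lt_of_le ht₁mem.1 with h|h
        · exfalso; rw [← h] at hGt₁; linarith
        · exact h
      have ht₁0 : (0:ℝ) < t₁ := lt_trans hp0 hpt₁
      have hGpos : ∀ s, p.1 ≤ s → s < t₁ → 0 < G s := by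
        intro s h1 h2
        have := hGanti ⟨h1, le_trans (le_of_lt h2) ht₁mem.2⟩ ht₁mem h2
        rw [hGt₁] at this
        linarith
      have hXt₁ : X t₁ = rt t₁ := by
        have h' : X t₁ - rt t₁ = 0 := hGt₁
        linarith
      have hDt₁ : dstar ≤ rcheck κ t₀ r₀ t₁ - X t₁ := hDlow t₁ ht₁mem
      have ht₁t₀ : t₁ < t₀ := by
        rcases lt_or_eq_of_le (le_trans ht₁mem.2 hε₀le) with h|h
        · exact h
        · exfalso
          rw [h] at hXt₁ hDt₁
          rw [rcheck_t0, hXt₁, hrtt0] at hDt₁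
          linarith
      refine ⟨t₁, hpt₁, ht₁mem.2, ht₁t₀, le_of_eq hGt₁.symm, hGpos, ?_⟩
      intro δ hδ
      have hΓreg : ((t₁, rt t₁) : ℝ × ℝ) ∈ region κ t₀ r₀ rt :=
        ⟨ht₁0, le_of_lt ht₁t₀, le_refl _, by simp only; linarith⟩
      have hcw : ContinuousWithinAt RP (region κ t₀ r₀ rt ∪
          {p : ℝ × ℝ | ∃ t ∈ Set.Ioc (0:ℝ) t₀, p = (t, rt t)}) (t₁, rt t₁) :=
        hRPcont _ (Or.inl hΓreg)
      rw [Metric.continuousWithinAt_iff] at hcw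
      obtain ⟨δ', hδ'0, hδ'⟩ := hcw δ hδ
      refine ⟨min (δ'/2) (dstar/2), by positivity, min_le_right _ _, ?_⟩
      intro h hh0 hhle
      have hhd : h ≤ dstar/2 := le_trans hhle (min_le_right _ _)
      have hhδ : h ≤ δ'/2 := le_trans hhle (min_le_left _ _)
      have hseg : ∀ u : ℝ, 0 ≤ u → u ≤ h → ((t₁, rt t₁ + u) : ℝ × ℝ) ∈ region κ t₀ r₀ rt := by
        intro u h1 h2
        exact ⟨ht₁0, le_of_lt ht₁t₀, by simp only; linarith, by simp only; linarith⟩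
      have hRPseg : ∀ u : ℝ, 0 ≤ u → u ≤ h → |RP (t₁, rt t₁ + u)| ≤ B + δ := by
        intro u h1 h2
        have hdd : dist ((t₁, rt t₁ + u) : ℝ × ℝ) ((t₁, rt t₁) : ℝ × ℝ) < δ' := by
          rw [Prod.dist_eq]
          simp only [dist_self, Real.dist_eq, add_sub_cancel_left, abs_of_nonneg h1]
          rw [max_eq_right h1]
          linarith
        have h3 := hδ' (Or.inl (hseg u h1 h2)) hdd
        rw [Real.dist_eq] at h3
        have h4 := abs_sub_abs_le_abs_sub (RP (t₁, rt t₁ + u)) (RP (t₁, rt t₁))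
        have h5 := hBΓ t₁ ⟨ht₁0, le_of_lt ht₁t₀⟩
        linarith
      have hpath : ContinuousOn (fun u : ℝ => ((t₁, rt t₁ + u) : ℝ × ℝ)) (Set.Icc 0 h) :=
        (continuous_const.prodMk (continuous_const.add continuous_id)).continuousOn
      have hcont_pdr : ContinuousOn (fun u : ℝ => pdr P (t₁, rt t₁ + u)) (Set.Icc 0 h) := by
        have h1 : ContinuousOn (fun u : ℝ => RP (t₁, rt t₁ + u)) (Set.Icc 0 h) := by
          apply hRPcont.comp hpath
          exact fun u hu => Or.inl (hseg u hu.1 hu.2)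
        have h2 : (fun u : ℝ => pdr P (t₁, rt t₁ + u))
            = fun u : ℝ => RP (t₁, rt t₁ + u) / t₁ := by
          funext u
          rw [hRPdef]
          field_simp
        rw [h2]
        exact h1.div_const _
      have hPcont : ContinuousOn (fun u : ℝ => P (t₁, rt t₁ + u)) (Set.Icc 0 h) := by
        apply hPC1.continuousOn.comp hpath
        exact fun u hu => hseg u hu.1 hu.2
      have hder : ∀ u ∈ Set.Ioo (0:ℝ) h, HasDerivWithinAt (fun u : ℝ => P (t₁, rt t₁ + u))
          (pdr P (t₁, rt t₁ + u)) (Set.Ioi u) u := by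
        intro u hu
        exact (hvert P hPC1 t₁ (rt t₁) u ht₁0 ht₁t₀ (by linarith [hu.1])
          (by linarith [hu.2])).hasDerivWithinAt
      have hFTC := intervalIntegral.integral_eq_sub_of_hasDeriv_right_of_le (le_of_lt hh0)
        hPcont hder (by
          apply ContinuousOn.intervalIntegrable
          rwa [Set.uIcc_of_le (le_of_lt hh0)])
      have hbnd : ∀ u ∈ Set.uIoc (0:ℝ) h, ‖pdr P (t₁, rt t₁ + u)‖ ≤ (B + δ)/t₁ := by
        intro u hu
        rw [Set.uIoc_of_le (le_of_lt hh0)] at hu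
        rw [Real.norm_eq_abs]
        have h1 := hRPseg u (le_of_lt hu.1) hu.2
        rw [hRPdef, abs_mul, abs_of_pos ht₁0] at h1
        rw [le_div_iff₀ ht₁0]
        linarith
      have hb := intervalIntegral.norm_integral_le_of_norm_le_const hbnd
      rw [hFTC] at hb
      rw [Real.norm_eq_abs, sub_zero, abs_of_pos hh0] at hb
      rw [hXt₁]
      calc |P (t₁, rt t₁ + h) - P (t₁, rt t₁)| ≤ (B + δ)/t₁ * h := by
            simpa using hb
        _ = h * (B + δ) / t₁ := by ring
    · -- top exit
      have hε₀t₀ : ε₀ < t₀ := by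
        rcases lt_or_eq_of_le hε₀le with h|h
        · exact h
        · exfalso
          have h1 := hDlow ε₀ ⟨le_of_lt hpε, le_refl _⟩
          simp only [hDD, hG, h, rcheck_t0, hrtt0] at h1 hcase
          linarith
      have hGposε : ∀ s, p.1 ≤ s → s < ε₀ → 0 < G s := by
        intro s h1 h2
        have := hGanti ⟨h1, le_of_lt h2⟩ ⟨le_of_lt hpε, le_refl _⟩ h2
        linarith
      refine ⟨ε₀, hpε, le_refl _, hε₀t₀, le_of_lt hcase, hGposε, ?_⟩
      intro δ hδ
      refine ⟨dstar/2, by positivity, le_refl _, ?_⟩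
      intro h hh0 hhle
      have hDε := hDlow ε₀ ⟨le_of_lt hpε, le_refl _⟩
      have hcond : ∀ u : ℝ, 0 ≤ u → u ≤ h →
          0 < ε₀ ∧ ε₀ < t₀ ∧ rt ε₀ < X ε₀ + u ∧ X ε₀ + u < rcheck κ t₀ r₀ ε₀ := by
        intro u h1 h2
        refine ⟨hε₀pos, hε₀t₀, by simp only [hG] at hcase; linarith, ?_⟩
        simp only [hDD] at hDε
        linarith
      have hpdrb : ∀ u : ℝ, 0 ≤ u → u ≤ h → |pdr P (ε₀, X ε₀ + u)| ≤ B/ε₀ := by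
        intro u h1 h2
        obtain ⟨c1, c2, c3, c4⟩ := hcond u h1 h2
        have hreg := hreg_of (ε₀, X ε₀ + u) c1 c2 c3 c4
        have h3 := hBtop _ hreg rfl
        rw [abs_mul, abs_of_pos hε₀pos] at h3
        rw [le_div_iff₀ hε₀pos]
        linarith
      have hM1 := hMVT P hPC1 ε₀ (X ε₀) h (B/ε₀) (le_of_lt hh0)
        (div_nonneg hB0 (le_of_lt hε₀pos)) hcond hpdrb
      calc |P (ε₀, X ε₀ + h) - P (ε₀, X ε₀)| ≤ (B/ε₀) * h := hM1
        _ ≤ h * (B + δ) / ε₀ := by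
            rw [div_mul_eq_mul_div, mul_comm]
            gcongr
            linarith
  -- common part
  have ht₁0 : (0:ℝ) < t₁ := lt_trans hp0 hpt₁
  have hXmem : ∀ s u : ℝ, p.1 ≤ s → s ≤ t₁ → 0 ≤ u → u ≤ dstar/2 →
      ((s, X s + u) : ℝ × ℝ) ∈ region κ t₀ r₀ rt := by
    intro s u h1 h2 h3 h4
    have hsI : s ∈ Set.Icc p.1 ε₀ := ⟨h1, le_trans h2 ht₁ε⟩
    have hGs : 0 ≤ G s := by
      rcases lt_or_eq_of_le h2 with h|h
      · exact le_of_lt (hGpos s h1 h)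
      · rw [h]; exact hGt₁0
    have hDs := hDlow s hsI
    simp only [hG] at hGs
    simp only [hDD] at hDs
    exact ⟨lt_of_lt_of_le hp0 h1, le_trans hsI.2 hε₀le, by simp only; linarith,
      by simp only; linarith⟩
  have hXint : ∀ s u : ℝ, p.1 ≤ s → s < t₁ → 0 ≤ u → u ≤ dstar/2 →
      0 < s ∧ s < t₀ ∧ rt s < X s + u ∧ X s + u < rcheck κ t₀ r₀ s := by
    intro s u h1 h2 h3 h4
    have hGs := hGpos s h1 h2
    have hDs := hDlow s ⟨h1, le_trans (le_of_lt h2) ht₁ε⟩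
    simp only [hG] at hGs
    simp only [hDD] at hDs
    exact ⟨lt_of_lt_of_le hp0 h1, lt_trans h2 ht₁t₀, by linarith, by linarith⟩
  have hδstep : ∀ δ : ℝ, 0 < δ → |RP p| ≤ max B (M/3) + M/4 + δ := by
    intro δ hδ
    obtain ⟨h₀, hh₀0, hh₀d, hexit'⟩ := hexit δ hδ
    have hdP : HasDerivAt (fun u : ℝ => P (p.1, p.2 + u)) (pdr P (p.1, p.2)) 0 := by
      have := hvert P hPC1 p.1 p.2 0 hp0 hpt₀ (by simpa using hpl) (by simpa using hpr)
      simpa using this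
    have hslope : Filter.Tendsto
        (fun h : ℝ => p.1 * |(P (p.1, p.2 + h) - P (p.1, p.2 + 0))/h|)
        (𝓝[>] (0:ℝ)) (𝓝 (p.1 * |pdr P (p.1, p.2)|)) := by
      have h1 := hasDerivAt_iff_tendsto_slope.1 hdP
      have h2 : (fun h : ℝ => (P (p.1, p.2 + h) - P (p.1, p.2 + 0))/h)
          = slope (fun u : ℝ => P (p.1, p.2 + u)) 0 := by
        funext x
        rw [slope_def_field, sub_zero]
      have hq : Filter.Tendsto (fun h : ℝ => (P (p.1, p.2 + h) - P (p.1, p.2 + 0))/h)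
          (𝓝[≠] (0:ℝ)) (𝓝 (pdr P (p.1, p.2))) := by
        rw [h2]
        exact h1
      have h3 := (hq.abs).const_mul p.1
      exact h3.mono_left (nhdsWithin_mono _
        (fun x hx => Set.mem_compl_singleton_iff.2 (ne_of_gt hx)))
    have hkey : ∀ h : ℝ, 0 < h → h ≤ h₀ →
        p.1 * |(P (p.1, p.2 + h) - P (p.1, p.2 + 0))/h| ≤ max B (M/3) + M/4 + δ := by
      intro h hh0 hhle
      have hhd : h ≤ dstar/2 := le_trans hhle hh₀d
      set ψ : ℝ → ℝ := fun s => P (s, X s + h) - P (s, X s) with hψ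
      set dq : ℝ → ℝ := fun s => Q (s, X s + h) - Q (s, X s) with hdq
      have hIccsub2 : Set.Icc p.1 t₁ ⊆ Set.Icc p.1 ε₀ := Set.Icc_subset_Icc_right ht₁ε
      have hFcomp : ∀ F : ℝ × ℝ → ℝ, ContDiffOn ℝ 1 F (region κ t₀ r₀ rt) → ∀ u : ℝ,
          0 ≤ u → u ≤ dstar/2 → ContinuousOn (fun s => F (s, X s + u)) (Set.Icc p.1 t₁) := by
        intro F hF u h1 h2
        apply hF.continuousOn.comp
        · intro s hs
          have hs0 : (0:ℝ) < s := lt_of_lt_of_le hp0 hs.1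
          exact (continuousAt_id.prodMk
            ((hXc s hs0 (le_trans hs.2 ht₁ε)).add continuousAt_const)).continuousWithinAt
        · intro s hs
          exact hXmem s u hs.1 hs.2 h1 h2
      have hFcomp0 : ∀ F : ℝ × ℝ → ℝ, ContDiffOn ℝ 1 F (region κ t₀ r₀ rt) →
          ContinuousOn (fun s => F (s, X s)) (Set.Icc p.1 t₁) := by
        intro F hF
        have := hFcomp F hF 0 (le_refl _) (le_of_lt (by positivity))
        simpa using this
      have hψc : ContinuousOn ψ (Set.Icc p.1 t₁) :=
        (hFcomp P hPC1 h (le_of_lt hh0) hhd).sub (hFcomp0 P hPC1)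
      have hdqc : ContinuousOn dq (Set.Icc p.1 t₁) :=
        (hFcomp Q hQC1 h (le_of_lt hh0) hhd).sub (hFcomp0 Q hQC1)
      have hαc : ContinuousOn (aa κ) (Set.Icc p.1 t₁) := by
        intro s hs
        have hs0 : (0:ℝ) < s := lt_of_lt_of_le hp0 hs.1
        exact (aa_contAt hκ (by linarith)
          (lt_of_le_of_lt (le_trans hs.2 ht₁ε) hε₀1)).continuousWithinAt
      have hβc : ContinuousOn (bb κ) (Set.Icc p.1 t₁) := by
        intro s hs
        have hs0 : (0:ℝ) < s := lt_of_lt_of_le hp0 hs.1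
        exact (bb_contAt hκ (by linarith)
          (lt_of_le_of_lt (le_trans hs.2 ht₁ε) hε₀1)).continuousWithinAt
      have hODE : ∀ s ∈ Set.Ioo p.1 t₁, HasDerivAt ψ
          ((ψ s - dq s)/(2*s) + aa κ s * (ψ s - dq s) - bb κ s * ψ s) s := by
        intro s hs
        have hs0 : (0:ℝ) < s := lt_trans hp0 hs.1
        have hsε : s ≤ ε₀ := le_trans (le_of_lt hs.2) ht₁ε
        obtain ⟨c1, c2, c3, c4⟩ := hXint s h (le_of_lt hs.1) hs.2 (le_of_lt hh0) hhd
        obtain ⟨d1, d2, d3, d4⟩ := hXint s 0 (le_of_lt hs.1) hs.2 (le_refl _)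
          (le_of_lt (by positivity))
        rw [add_zero] at d3 d4
        have hd1 := hhoriz P hPC1 h s hs0 hsε c2 c3 c4
        have hd2' := hhoriz P hPC1 0 s hs0 hsε d2 (by rwa [add_zero]) (by rwa [add_zero])
        simp only [add_zero] at hd2'
        have hsub := hd1.sub hd2'
        have hq1 := hreg_of (s, X s + h) c1 c2 c3 c4
        have hq2 := hreg_of (s, X s) d1 d2 d3 d4
        have e1 := heq _ hq1
        have e2 := heq _ hq2
        simp only at e1 e2
        rw [e1, e2] at hsub
        have hval : ((P (s, X s + h) - Q (s, X s + h))/(2*s)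
              + aa κ s * (P (s, X s + h) - Q (s, X s + h)) - bb κ s * P (s, X s + h))
            - ((P (s, X s) - Q (s, X s))/(2*s)
              + aa κ s * (P (s, X s) - Q (s, X s)) - bb κ s * P (s, X s))
            = (ψ s - dq s)/(2*s) + aa κ s * (ψ s - dq s) - bb κ s * ψ s := by
          simp only [hψ, hdq]
          ring
        rw [hval] at hsub
        exact hsub
      have hbnd : ∀ s ∈ Set.Ioo p.1 t₁, |ψ s| ≤ h * M / s ∧ |dq s| ≤ h * M / s := by
        intro s hs
        have hs0 : (0:ℝ) < s := lt_trans hp0 hs.1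
        have hsε : s ≤ ε₀ := le_trans (le_of_lt hs.2) ht₁ε
        have hcond : ∀ u : ℝ, 0 ≤ u → u ≤ h →
            0 < s ∧ s < t₀ ∧ rt s < X s + u ∧ X s + u < rcheck κ t₀ r₀ s :=
          fun u h1 h2 => hXint s u (le_of_lt hs.1) hs.2 h1 (le_trans h2 hhd)
        have hMs : 0 ≤ M/s := by positivity
        have hbP : ∀ u : ℝ, 0 ≤ u → u ≤ h → |pdr P (s, X s + u)| ≤ M/s := by
          intro u h1 h2
          obtain ⟨c1, c2, c3, c4⟩ := hcond u h1 h2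
          have hb := (hMbound (s, X s + u) (hreg_of _ c1 c2 c3 c4) (le_of_lt hs.1) hsε).1
          simp only at hb
          rw [abs_mul, abs_of_pos hs0] at hb
          rw [le_div_iff₀ hs0]
          linarith [mul_comm s |pdr P (s, X s + u)|]
        have hbQ : ∀ u : ℝ, 0 ≤ u → u ≤ h → |pdr Q (s, X s + u)| ≤ M/s := by
          intro u h1 h2
          obtain ⟨c1, c2, c3, c4⟩ := hcond u h1 h2
          have hb := (hMbound (s, X s + u) (hreg_of _ c1 c2 c3 c4) (le_of_lt hs.1) hsε).2
          simp only at hb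
          rw [abs_mul, abs_of_pos hs0] at hb
          rw [le_div_iff₀ hs0]
          linarith [mul_comm s |pdr Q (s, X s + u)|]
        constructor
        · have := hMVT P hPC1 s (X s) h (M/s) (le_of_lt hh0) hMs hcond hbP
          calc |ψ s| ≤ (M/s) * h := this
            _ = h * M / s := by ring
        · have := hMVT Q hQC1 s (X s) h (M/s) (le_of_lt hh0) hMs hcond hbQ
          calc |dq s| ≤ (M/s) * h := this
            _ = h * M / s := by ring
      have hαb : ∀ s ∈ Set.Ioo p.1 t₁, |aa κ s| ≤ k0 * s / 2 := by
        intro s hs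
        exact haabd s (lt_trans hp0 hs.1)
          (le_trans (le_of_lt hs.2) (le_trans ht₁ε hε₀le))
      have hβb : ∀ s ∈ Set.Ioo p.1 t₁, |bb κ s| ≤ k0 * s := by
        intro s hs
        exact hbbbd s (lt_trans hp0 hs.1)
          (le_trans (le_of_lt hs.2) (le_trans ht₁ε hε₀le))
      have hexitψ : |ψ t₁| ≤ h * (B + δ) / t₁ := hexit' h hh0 hhle
      obtain ⟨θ, hθ0, hθ1, hGr⟩ := gronwall_aux k0 M (B+δ) h t₁ ε₀ p.1 hp0 hpt₁ ht₁ε hh0 hM0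
        (by linarith) hk0pos hsmall ψ dq (aa κ) (bb κ) hψc hdqc hαc hβc hODE hbnd hαb hβb hexitψ
      have hψp : ψ p.1 = P (p.1, p.2 + h) - P (p.1, p.2 + 0) := by
        simp only [hψ, hXp, add_zero]
      have hnum : θ*(B+δ) + (1-θ)*(M/3) + M/4 ≤ max B (M/3) + M/4 + δ := by
        have h1 : θ*B ≤ θ*max B (M/3) := mul_le_mul_of_nonneg_left (le_max_left _ _) hθ0
        have h2 : (1-θ)*(M/3) ≤ (1-θ)*max B (M/3) :=
          mul_le_mul_of_nonneg_left (le_max_right _ _) (by linarith)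
        have h3 : θ*δ ≤ δ := by nlinarith
        nlinarith [h1, h2, h3]
      rw [← hψp, abs_div, abs_of_pos hh0]
      calc p.1 * (|ψ p.1| / h) = p.1 * |ψ p.1| / h := by ring
        _ ≤ (θ*(B+δ) + (1-θ)*(M/3) + M/4) := by
            rw [div_le_iff₀ hh0]
            calc p.1 * |ψ p.1| ≤ h * (θ*(B+δ) + (1-θ)*(M/3) + M/4) := hGr
              _ = (θ*(B+δ) + (1-θ)*(M/3) + M/4) * h := by ring
        _ ≤ max B (M/3) + M/4 + δ := hnum
    have hev : ∀ᶠ h : ℝ in 𝓝[>] (0:ℝ),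
        p.1 * |(P (p.1, p.2 + h) - P (p.1, p.2 + 0))/h| ≤ max B (M/3) + M/4 + δ := by
      filter_upwards [Ioc_mem_nhdsGT_of_mem (Set.left_mem_Ico.2 hh₀0)] with h hh
      exact hkey h hh.1 hh.2
    have hfin := le_of_tendsto hslope hev
    rw [hRPdef, abs_mul, abs_of_pos hp0]
    exact hfin
  exact le_of_forall_pos_le_add hδstep
/-- Lemma 3.3 (bounds on the scaled r-derivatives). -/
theorem stmt_5 (κ t₀ r₀ : ℝ) (hκ : 0 < κ) (ht₀ : t₀ ∈ Set.Ioo (0:ℝ) 1)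
    (hr₀ : 0 < r₀) (rt : ℝ → ℝ)
    (hrtC1 : ContDiffOn ℝ 1 rt (Set.Icc 0 t₀))
    (hrtmono : StrictMonoOn rt (Set.Icc 0 t₀))
    (hrt0 : rt 0 = 0) (hrtt0 : rt t₀ = r₀)
    (hspace : ∀ t ∈ Set.Ioc (0:ℝ) t₀, lam κ t < deriv rt t)
    (Ub Vb : ℝ × ℝ → ℝ)
    (hUC1 : ContDiffOn ℝ 1 Ub (region κ t₀ r₀ rt))
    (hVC1 : ContDiffOn ℝ 1 Vb (region κ t₀ r₀ rt))
    (hsys : Sys38 κ Ub Vb (region κ t₀ r₀ rt))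
    (R S : ℝ × ℝ → ℝ)
    (hR : ∀ p, R p = p.1 * pdr Ub p) (hS : ∀ p, S p = p.1 * pdr Vb p)
    (hRcont : ContinuousOn R (region κ t₀ r₀ rt ∪
      {p : ℝ × ℝ | ∃ t ∈ Set.Ioc (0:ℝ) t₀, p = (t, rt t)}))
    (hScont : ContinuousOn S (region κ t₀ r₀ rt ∪
      {p : ℝ × ℝ | ∃ t ∈ Set.Ioc (0:ℝ) t₀, p = (t, rt t)}))
    (k₀ ε₀ Mb : ℝ)
    (hk₀ : k₀ = (κ + 2)/(κ * (1 - t₀^2)))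
    (hε₀ : ε₀ = min t₀ (1/(4*k₀)))
    (hbdd₂ : BddAbove {x : ℝ | ∃ p ∈ region κ t₀ r₀ rt, ε₀ ≤ p.1 ∧ x = max |R p| |S p|})
    (hbddΓ : BddAbove {x : ℝ | ∃ t ∈ Set.Ioc (0:ℝ) t₀, x = max |R (t, rt t)| |S (t, rt t)|})
    (hMb : Mb = 1 + 2 * max
      (sSup {x : ℝ | ∃ p ∈ region κ t₀ r₀ rt, ε₀ ≤ p.1 ∧ x = max |R p| |S p|})
      (sSup {x : ℝ | ∃ t ∈ Set.Ioc (0:ℝ) t₀, x = max |R (t, rt t)| |S (t, rt t)|})) :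
    ∀ p ∈ region κ t₀ r₀ rt, p.1 ≤ ε₀ → |R p| < Mb ∧ |S p| < Mb := by
  obtain ⟨ht₀0, ht₀1⟩ := ht₀
  have ht₀sq : (0:ℝ) < 1 - t₀^2 := by nlinarith
  have hk₀pos : 0 < k₀ := by rw [hk₀]; positivity
  have hk₀1 : 1 < k₀ := by
    rw [hk₀, lt_div_iff₀ (by positivity)]
    nlinarith
  have hε₀pos : 0 < ε₀ := by
    rw [hε₀]
    apply lt_min ht₀0
    positivity
  have hε₀le : ε₀ ≤ t₀ := by rw [hε₀]; exact min_le_left _ _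
  have hε₀k : ε₀ ≤ 1/(4*k₀) := by rw [hε₀]; exact min_le_right _ _
  have hε₀4 : ε₀ ≤ 1/4 := by
    apply le_trans hε₀k
    rw [div_le_div_iff₀ (by positivity) (by norm_num)]
    nlinarith
  have hsmall : 4 * k₀ * ε₀^2 ≤ 1/4 := by
    have h1 : 4 * k₀ * ε₀ ≤ 1 := by
      rw [le_div_iff₀ (by positivity)] at hε₀k
      nlinarith
    nlinarith [hε₀pos]
  have hrtc : ContinuousOn rt (Set.Icc 0 t₀) := hrtC1.continuousOn
  have haabd : ∀ s : ℝ, 0 < s → s ≤ t₀ → |aa κ s| ≤ k₀ * s / 2 := by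
    intro s h1 h2
    rw [hk₀]
    exact aa_abs_le hκ ht₀1 h1 h2
  have hbbbd : ∀ s : ℝ, 0 < s → s ≤ t₀ → |bb κ s| ≤ k₀ * s := by
    intro s h1 h2
    rw [hk₀]
    exact bb_abs_le hκ ht₀1 h1 h2
  -- the two characteristic equations
  have heqU : ∀ q ∈ region κ t₀ r₀ rt, pdt Ub q + 1 * lam κ q.1 * pdr Ub q
      = (Ub q - Vb q)/(2*q.1) + aa κ q.1 * (Ub q - Vb q) - bb κ q.1 * Ub q := by
    intro q hq
    have h1 := (hsys q hq).1
    simp only [aa, bb]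
    linear_combination h1
  have heqV : ∀ q ∈ region κ t₀ r₀ rt, pdt Vb q + (-1) * lam κ q.1 * pdr Vb q
      = (Vb q - Ub q)/(2*q.1) + aa κ q.1 * (Vb q - Ub q) - bb κ q.1 * Vb q := by
    intro q hq
    have h1 := (hsys q hq).2
    simp only [aa, bb]
    linear_combination h1
  -- the boundary bound B
  set SA := {x : ℝ | ∃ p ∈ region κ t₀ r₀ rt, ε₀ ≤ p.1 ∧ x = max |R p| |S p|} with hSA
  set SB := {x : ℝ | ∃ t ∈ Set.Ioc (0:ℝ) t₀, x = max |R (t, rt t)| |S (t, rt t)|} with hSB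
  set B := max (sSup SA) (sSup SB) with hB
  have hq₀ : ((t₀, r₀) : ℝ × ℝ) ∈ region κ t₀ r₀ rt := by
    refine ⟨ht₀0, le_refl _, ?_, ?_⟩ <;> simp only [hrtt0, rcheck_t0] <;> exact le_refl _
  have hSAmem : max |R (t₀, r₀)| |S (t₀, r₀)| ∈ SA := ⟨(t₀, r₀), hq₀, hε₀le, rfl⟩
  have hB0 : 0 ≤ B := by
    have h1 : (0:ℝ) ≤ max |R (t₀, r₀)| |S (t₀, r₀)| := le_trans (abs_nonneg _) (le_max_left _ _)
    have h2 := le_csSup hbdd₂ hSAmem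
    exact le_trans (le_trans h1 h2) (le_max_left _ _)
  have hBtopU : ∀ q ∈ region κ t₀ r₀ rt, q.1 = ε₀ → |q.1 * pdr Ub q| ≤ B := by
    intro q hq hq1
    rw [← hR]
    have h1 : max |R q| |S q| ∈ SA := ⟨q, hq, le_of_eq hq1.symm, rfl⟩
    exact le_trans (le_max_left _ _) (le_trans (le_csSup hbdd₂ h1) (le_max_left _ _))
  have hBtopV : ∀ q ∈ region κ t₀ r₀ rt, q.1 = ε₀ → |q.1 * pdr Vb q| ≤ B := by
    intro q hq hq1
    rw [← hS]
    have h1 : max |R q| |S q| ∈ SA := ⟨q, hq, le_of_eq hq1.symm, rfl⟩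
    exact le_trans (le_max_right _ _) (le_trans (le_csSup hbdd₂ h1) (le_max_left _ _))
  have hBΓU : ∀ t ∈ Set.Ioc (0:ℝ) t₀, |R (t, rt t)| ≤ B := by
    intro t ht
    have h1 : max |R (t, rt t)| |S (t, rt t)| ∈ SB := ⟨t, ht, rfl⟩
    exact le_trans (le_max_left _ _) (le_trans (le_csSup hbddΓ h1) (le_max_right _ _))
  have hBΓV : ∀ t ∈ Set.Ioc (0:ℝ) t₀, |S (t, rt t)| ≤ B := by
    intro t ht
    have h1 : max |R (t, rt t)| |S (t, rt t)| ∈ SB := ⟨t, ht, rfl⟩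
    exact le_trans (le_max_right _ _) (le_trans (le_csSup hbddΓ h1) (le_max_right _ _))
  have hMbB : Mb = 1 + 2 * B := hMb
  -- now fix p
  intro p hp hp1
  have hpc : 0 < p.1 := hp.1
  set V := {x : ℝ | ∃ q ∈ region κ t₀ r₀ rt, p.1 ≤ q.1 ∧ q.1 ≤ ε₀ ∧ x = max |R q| |S q|}
    with hV
  have hVne : V.Nonempty := ⟨max |R p| |S p|, p, hp, le_refl _, hp1, rfl⟩
  set rect := Set.Icc p.1 ε₀ ×ˢ Set.Icc (0:ℝ) 1 with hrect
  set φmap : ℝ × ℝ → ℝ × ℝ :=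
    fun z => (z.1, rt z.1 + z.2 * (rcheck κ t₀ r₀ z.1 - rt z.1)) with hφ
  have hφc : ContinuousOn φmap rect := by
    have hrt1 : ContinuousOn (fun z : ℝ × ℝ => rt z.1) rect := by
      apply hrtc.comp continuousOn_fst
      intro z hz
      exact ⟨le_trans (le_of_lt hpc) hz.1.1, le_trans hz.1.2 hε₀le⟩
    have hrc1 : ContinuousOn (fun z : ℝ × ℝ => rcheck κ t₀ r₀ z.1) rect := by
      intro z hz
      exact ((hasDerivAt_rcheck hκ ⟨ht₀0, ht₀1⟩ ⟨lt_of_lt_of_le hpc hz.1.1,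
        lt_of_le_of_lt (le_trans hz.1.2 hε₀le) ht₀1⟩).continuousAt).comp_continuousWithinAt
        continuousWithinAt_fst
    exact continuousOn_fst.prodMk (hrt1.add (continuousOn_snd.mul (hrc1.sub hrt1)))
  have hK : IsCompact (φmap '' rect) :=
    (isCompact_Icc.prod isCompact_Icc).image_of_continuousOn hφc
  have himg : φmap '' rect ⊆ region κ t₀ r₀ rt := by
    rintro _ ⟨z, hz, rfl⟩
    have hz10 : 0 < z.1 := lt_of_lt_of_le hpc hz.1.1
    have hz1t : z.1 ≤ t₀ := le_trans hz.1.2 hε₀le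
    have hd0 : 0 ≤ rcheck κ t₀ r₀ z.1 - rt z.1 := by
      have : rt z.1 ≤ rcheck κ t₀ r₀ z.1 := by
        rcases lt_or_eq_of_le hz1t with h|h
        · exact le_of_lt (rt_lt_rcheck hκ ⟨ht₀0, ht₀1⟩ hrtc hrtt0 hspace ⟨hz10, h⟩)
        · rw [h, hrtt0, rcheck_t0]
      linarith
    refine ⟨hz10, hz1t, ?_, ?_⟩ <;> simp only [hφ]
    · nlinarith [hz.2.1]
    · nlinarith [hz.2.1, hz.2.2]
  have hslabK : ∀ q ∈ region κ t₀ r₀ rt, p.1 ≤ q.1 → q.1 ≤ ε₀ → q ∈ φmap '' rect := by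
    intro q hq h1 h2
    obtain ⟨hq0, hqt, hql, hqr⟩ := hq
    have hd0 : 0 ≤ rcheck κ t₀ r₀ q.1 - rt q.1 := by linarith
    rcases eq_or_lt_of_le hd0 with hdz|hdz
    · refine ⟨(q.1, 0), ⟨⟨h1, h2⟩, by norm_num⟩, ?_⟩
      have hq2 : q.2 = rt q.1 := by linarith
      simp only [hφ]
      rw [Prod.ext_iff]
      constructor
      · rfl
      · simp [hq2]
    · refine ⟨(q.1, (q.2 - rt q.1)/(rcheck κ t₀ r₀ q.1 - rt q.1)),
        ⟨⟨h1, h2⟩, ⟨div_nonneg (by linarith) (le_of_lt hdz), ?_⟩⟩, ?_⟩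
      · rw [div_le_one hdz]
        linarith
      · simp only [hφ]
        rw [Prod.ext_iff]
        constructor
        · rfl
        · simp only
          field_simp
          ring
  have hfcont : ContinuousOn (fun q : ℝ × ℝ => max |R q| |S q|) (φmap '' rect) := by
    have h1 : φmap '' rect ⊆ region κ t₀ r₀ rt ∪
        {p : ℝ × ℝ | ∃ t ∈ Set.Ioc (0:ℝ) t₀, p = (t, rt t)} :=
      fun x hx => Or.inl (himg hx)
    intro x hx
    exact (((hRcont.mono h1) x hx).abs).max (((hScont.mono h1) x hx).abs)
  have hbddV : BddAbove V := by
    apply BddAbove.mono _ (hK.bddAbove_image hfcont)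
    rintro x ⟨q, hq, h1, h2, rfl⟩
    exact ⟨q, hslabK q hq h1 h2, rfl⟩
  set M := sSup V with hM
  have hMge : ∀ q ∈ region κ t₀ r₀ rt, p.1 ≤ q.1 → q.1 ≤ ε₀ → max |R q| |S q| ≤ M :=
    fun q hq h1 h2 => le_csSup hbddV ⟨q, hq, h1, h2, rfl⟩
  have hM0 : 0 ≤ M :=
    le_trans (le_trans (abs_nonneg _) (le_max_left _ _)) (hMge p hp (le_refl _) hp1)
  have hMlt : M < Mb := by
    by_contra hcon
    push_neg at hcon
    have hBM : B ≤ (M - 1)/2 := by rw [hMbB] at hcon; linarith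
    have hM1 : 1 ≤ M := by rw [hMbB] at hcon; linarith
    have hstepA : ∀ q ∈ region κ t₀ r₀ rt, p.1 ≤ q.1 → q.1 < ε₀ →
        rt q.1 < q.2 → q.2 < rcheck κ t₀ r₀ q.1 → max |R q| |S q| ≤ 3/4 * M := by
      intro q hq h1 h2 h3 h4
      have hMbound' : ∀ q' ∈ region κ t₀ r₀ rt, q.1 ≤ q'.1 → q'.1 ≤ ε₀ →
          |q'.1 * pdr Ub q'| ≤ M ∧ |q'.1 * pdr Vb q'| ≤ M := by
        intro q' hq' ha hb
        have hh := hMge q' hq' (le_trans h1 ha) hb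
        constructor
        · rw [← hR]; exact le_trans (le_max_left _ _) hh
        · rw [← hS]; exact le_trans (le_max_right _ _) hh
      have hMbound'' : ∀ q' ∈ region κ t₀ r₀ rt, q.1 ≤ q'.1 → q'.1 ≤ ε₀ →
          |q'.1 * pdr Vb q'| ≤ M ∧ |q'.1 * pdr Ub q'| ≤ M := by
        intro q' hq' ha hb
        exact ⟨(hMbound' q' hq' ha hb).2, (hMbound' q' hq' ha hb).1⟩
      have hRb := core_bound κ t₀ r₀ hκ ⟨ht₀0, ht₀1⟩ rt hrtc hrtt0 hspace Ub Vb hUC1 hVC1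
        1 (Or.inl rfl) heqU R hR hRcont ε₀ hε₀pos hε₀le k₀ (by linarith) haabd hbbbd hsmall
        M B hM0 hB0 q hq.1 h2 h3 h4 hMbound' hBtopU hBΓU
      have hSb := core_bound κ t₀ r₀ hκ ⟨ht₀0, ht₀1⟩ rt hrtc hrtt0 hspace Vb Ub hVC1 hUC1
        (-1) (Or.inr rfl) heqV S hS hScont ε₀ hε₀pos hε₀le k₀ (by linarith) haabd hbbbd hsmall
        M B hM0 hB0 q hq.1 h2 h3 h4 hMbound'' hBtopV hBΓV
      have hfin : max B (M/3) + M/4 ≤ 3/4*M := by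
        have hmx : max B (M/3) ≤ M/2 := max_le (by linarith) (by linarith)
        linarith
      exact max_le (le_trans hRb hfin) (le_trans hSb hfin)
    have hstepB : ∀ q ∈ region κ t₀ r₀ rt, p.1 ≤ q.1 → q.1 ≤ ε₀ →
        max |R q| |S q| ≤ 3/4 * M := by
      intro q hq h1 h2
      rcases eq_or_lt_of_le h2 with hqε|hqε
      · have e1 : |R q| ≤ B := by rw [hR]; exact hBtopU q hq hqε
        have e2 : |S q| ≤ B := by rw [hS]; exact hBtopV q hq hqε
        exact max_le (by linarith) (by linarith)
      · obtain ⟨hq0, hqt, hql, hqr⟩ := hq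
        have hqt₀ : q.1 < t₀ := lt_of_lt_of_le hqε hε₀le
        have hltq : rt q.1 < rcheck κ t₀ r₀ q.1 :=
          rt_lt_rcheck hκ ⟨ht₀0, ht₀1⟩ hrtc hrtt0 hspace ⟨hq0, hqt₀⟩
        set c := (rt q.1 + rcheck κ t₀ r₀ q.1)/2 with hc
        set qn : ℕ → ℝ × ℝ := fun n => (q.1, q.2 + (c - q.2) * (1/(n+1))) with hqn
        have hqnint : ∀ n : ℕ, rt q.1 < (qn n).2 ∧ (qn n).2 < rcheck κ t₀ r₀ q.1 := by
          intro n
          have hw0 : (0:ℝ) < 1/((n:ℝ)+1) := by positivity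
          have hw1 : 1/((n:ℝ)+1) ≤ 1 := by
            rw [div_le_one (by positivity)]
            have : (0:ℝ) ≤ (n:ℝ) := Nat.cast_nonneg n
            linarith
          constructor <;> simp only [hqn, hc] <;> push_cast <;> nlinarith
        have hqnreg : ∀ n, qn n ∈ region κ t₀ r₀ rt := fun n =>
          ⟨hq0, hqt, le_of_lt (hqnint n).1, le_of_lt (hqnint n).2⟩
        have hA : ∀ n, max |R (qn n)| |S (qn n)| ≤ 3/4*M := fun n =>
          hstepA (qn n) (hqnreg n) h1 hqε (hqnint n).1 (hqnint n).2
        have htd : Filter.Tendsto qn Filter.atTop (𝓝 q) := by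
          have h0 : Filter.Tendsto (fun n : ℕ => (c - q.2) * (1/((n:ℝ)+1)))
              Filter.atTop (𝓝 0) := by
            have hb0 := tendsto_one_div_add_atTop_nhds_zero_nat (𝕜 := ℝ)
            simpa using hb0.const_mul (c - q.2)
          have h2' : Filter.Tendsto (fun n : ℕ => q.2 + (c - q.2) * (1/((n:ℝ)+1)))
              Filter.atTop (𝓝 q.2) := by
            simpa using tendsto_const_nhds.add h0
          exact Filter.Tendsto.prodMk_nhds tendsto_const_nhds h2'
        have htdw : Filter.Tendsto qn Filter.atTop (𝓝[region κ t₀ r₀ rt ∪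
            {p : ℝ × ℝ | ∃ t ∈ Set.Ioc (0:ℝ) t₀, p = (t, rt t)}] q) :=
          tendsto_nhdsWithin_of_tendsto_nhds_of_eventually_within qn htd
            (Filter.Eventually.of_forall (fun n => Or.inl (hqnreg n)))
        have hRlim : Filter.Tendsto (fun n => |R (qn n)|) Filter.atTop (𝓝 |R q|) :=
          (((hRcont q (Or.inl ⟨hq0, hqt, hql, hqr⟩)).tendsto).comp htdw).abs
        have hSlim : Filter.Tendsto (fun n => |S (qn n)|) Filter.atTop (𝓝 |S q|) :=
          (((hScont q (Or.inl ⟨hq0, hqt, hql, hqr⟩)).tendsto).comp htdw).abs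
        have hmax : Filter.Tendsto (fun n => max |R (qn n)| |S (qn n)|) Filter.atTop
            (𝓝 (max |R q| |S q|)) := hRlim.max hSlim
        exact le_of_tendsto hmax (Filter.Eventually.of_forall hA)
    have hcontra : M ≤ 3/4*M := by
      apply csSup_le hVne
      rintro x ⟨q, hq, h1, h2, rfl⟩
      exact hstepB q hq h1 h2
    linarith
  have hfinal := hMge p hp (le_refl _) hp1
  constructor
  · exact lt_of_le_of_lt (le_trans (le_max_left _ _) hfinal) hMlt
  · exact lt_of_le_of_lt (le_trans (le_max_right _ _) hfinal) hMlt
end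

section
/- Lemma 3.4 (uniform boundedness of the singular quotient). Let (Ū, V̄) be a C¹ solution of system (3.8) on Ω which extends continuously to the boundary curve Γ = {(t, r̃(t)) : 0 < t ≤ t₀}. Assume there are constants C₁, C₂, C₃ such that |Ū| ≤ C₁ and |V̄| ≤ C₁ on Ω, |t·∂_r V̄| ≤ C₂ on Ω, and |(Ū − V̄)/t| ≤ C₃ on Γ. Then the function W̄ := (Ū − V̄)/t is uniformly bounded on Ω, i.e. there is a constant C (depending only on κ, t₀, C₁, C₂, C₃) such that |Ū(t,r) − V̄(t,r)| ≤ C·t for all (t,r) ∈ Ω. -/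
open Set Filter MeasureTheory Topology

lemma lam_contAt_s6 {κ : ℝ} (hκ : 0 < κ) {u : ℝ} (hu : u^2 < 1) : ContinuousAt (lam κ) u := by
  have hden : ((1 - u^2) * (κ + 1 - u^2)) ≠ 0 := by nlinarith
  unfold lam
  exact ContinuousAt.div (by fun_prop) (by fun_prop) hden

lemma sq_lt_one_of_mem {t₀ u : ℝ} (ht₀ : t₀ ∈ Set.Ioo (0:ℝ) 1) (hu : u ∈ Set.Icc 0 t₀) :
    u^2 < 1 := by nlinarith [hu.1, hu.2, ht₀.2]

lemma lam_contOn_s6 {κ t₀ : ℝ} (hκ : 0 < κ) (ht₀ : t₀ ∈ Set.Ioo (0:ℝ) 1) :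
    ContinuousOn (lam κ) (Set.Icc 0 t₀) :=
  fun u hu => (lam_contAt_s6 hκ (sq_lt_one_of_mem ht₀ hu)).continuousWithinAt

lemma lam_meas (κ : ℝ) : Measurable (lam κ) := by
  unfold lam
  exact (((Real.continuous_sqrt.comp (continuous_const.sub (continuous_pow 2))).mul
    (continuous_pow 2)).measurable).div
      (by fun_prop : Continuous fun t : ℝ => (1 - t^2) * (κ + 1 - t^2)).measurable

lemma lam_smaf (κ : ℝ) (l : Filter ℝ) : StronglyMeasurableAtFilter (lam κ) l :=
  ⟨Set.univ, Filter.univ_mem, (lam_meas κ).aestronglyMeasurable⟩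

lemma lam_ii {κ t₀ : ℝ} (hκ : 0 < κ) (ht₀ : t₀ ∈ Set.Ioo (0:ℝ) 1) {a b : ℝ}
    (ha : a ∈ Set.Icc (0:ℝ) t₀) (hb : b ∈ Set.Icc (0:ℝ) t₀) :
    IntervalIntegrable (lam κ) volume a b := by
  apply ContinuousOn.intervalIntegrable
  apply (lam_contOn_s6 hκ ht₀).mono
  rw [Set.uIcc, Set.Icc_subset_Icc_iff]
  · exact ⟨le_inf ha.1 hb.1, sup_le ha.2 hb.2⟩
  · exact inf_le_sup

lemma rcheck_hasDerivAt {κ t₀ r₀ : ℝ} (hκ : 0 < κ) (ht₀ : t₀ ∈ Set.Ioo (0:ℝ) 1) {u : ℝ}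
    (hu : u ∈ Set.Icc 0 t₀) : HasDerivAt (rcheck κ t₀ r₀) (lam κ u) u := by
  have h1 : HasDerivAt (fun s => ∫ x in s..t₀, lam κ x) (-lam κ u) u :=
    intervalIntegral.integral_hasDerivAt_left
      (lam_ii hκ ht₀ hu ⟨le_of_lt ht₀.1, le_rfl⟩) (lam_smaf κ _)
      (lam_contAt_s6 hκ (sq_lt_one_of_mem ht₀ hu))
  have h2 := h1.const_sub r₀
  show HasDerivAt (fun s => r₀ - ∫ x in s..t₀, lam κ x) _ u
  simpa using h2

lemma region_mem_nhds {κ t₀ r₀ : ℝ} (hκ : 0 < κ) (ht₀ : t₀ ∈ Set.Ioo (0:ℝ) 1) {rt : ℝ → ℝ}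
    (hrtC1 : ContDiffOn ℝ 1 rt (Set.Icc 0 t₀))
    {u ru : ℝ} (h1 : 0 < u) (h2 : u < t₀) (h3 : rt u < ru) (h4 : ru < rcheck κ t₀ r₀ u) :
    region κ t₀ r₀ rt ∈ 𝓝 ((u, ru) : ℝ × ℝ) := by
  have hrtc : ContinuousAt rt u :=
    (hrtC1.continuousOn.continuousAt (Icc_mem_nhds (by linarith) (by linarith)))
  have hrcc : ContinuousAt (rcheck κ t₀ r₀) u :=
    (rcheck_hasDerivAt hκ ht₀ ⟨le_of_lt h1, le_of_lt h2⟩).continuousAt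
  have e1 : ∀ᶠ x : ℝ × ℝ in 𝓝 (u, ru), 0 < x.1 :=
    continuousAt_const.eventually_lt continuous_fst.continuousAt h1
  have e2 : ∀ᶠ x : ℝ × ℝ in 𝓝 (u, ru), x.1 < t₀ :=
    continuous_fst.continuousAt.eventually_lt continuousAt_const h2
  have e3 : ∀ᶠ x : ℝ × ℝ in 𝓝 (u, ru), rt x.1 < x.2 :=
    ContinuousAt.eventually_lt (hrtc.comp continuous_fst.continuousAt)
      continuous_snd.continuousAt h3
  have e4 : ∀ᶠ x : ℝ × ℝ in 𝓝 (u, ru), x.2 < rcheck κ t₀ r₀ x.1 :=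
    ContinuousAt.eventually_lt continuous_snd.continuousAt
      (show ContinuousAt (fun x : ℝ × ℝ => rcheck κ t₀ r₀ x.1) (u, ru) from
        ContinuousAt.comp (g := rcheck κ t₀ r₀) (f := Prod.fst) (x := ((u, ru) : ℝ × ℝ))
          hrcc continuous_fst.continuousAt) h4
  have h : ∀ᶠ x : ℝ × ℝ in 𝓝 (u, ru), x ∈ region κ t₀ r₀ rt := by
    filter_upwards [e1, e2, e3, e4] with x a b c d
    exact ⟨a, le_of_lt b, le_of_lt c, le_of_lt d⟩
  exact h

lemma alg_main {κ u UU VV AU BU AV BV sq : ℝ} (hu : u ≠ 0) (h1 : 1 - u^2 ≠ 0)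
    (h2 : κ + 1 - u^2 ≠ 0)
    (e1 : AU + sq * u^2 / ((1-u^2)*(κ+1-u^2)) * BU
      = (UU - VV)/(2*u) + ((κ+2-u^2)*u/(2*((1-u^2)*(κ+1-u^2))))*(UU-VV)
        - ((κ+2-2*u^2)*u/((1-u^2)*(κ+1-u^2)))*UU)
    (e2 : AV - sq * u^2 / ((1-u^2)*(κ+1-u^2)) * BV
      = (VV - UU)/(2*u) - ((κ+2-u^2)*u/(2*((1-u^2)*(κ+1-u^2))))*(UU-VV)
        - ((κ+2-2*u^2)*u/((1-u^2)*(κ+1-u^2)))*VV) :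
    ((AU + sq*u^2/((1-u^2)*(κ+1-u^2)) * BU - (AV + sq*u^2/((1-u^2)*(κ+1-u^2)) * BV)) * u
        - (UU - VV) * 1)/u^2
      = u^2/((1-u^2)*(κ+1-u^2)) * (UU - VV) - 2*sq/((1-u^2)*(κ+1-u^2)) * (u * BV) := by
  have h3 : AU + sq*u^2/((1-u^2)*(κ+1-u^2)) * BU - (AV + sq*u^2/((1-u^2)*(κ+1-u^2)) * BV)
      = ((UU - VV)/(2*u) + ((κ+2-u^2)*u/(2*((1-u^2)*(κ+1-u^2))))*(UU-VV)
          - ((κ+2-2*u^2)*u/((1-u^2)*(κ+1-u^2)))*UU)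
        - ((VV - UU)/(2*u) - ((κ+2-u^2)*u/(2*((1-u^2)*(κ+1-u^2))))*(UU-VV)
          - ((κ+2-2*u^2)*u/((1-u^2)*(κ+1-u^2)))*VV)
        - 2 * (sq*u^2/((1-u^2)*(κ+1-u^2))) * BV := by
    linear_combination e1 - e2
  rw [h3]
  field_simp
  ring

set_option maxHeartbeats 1000000 in
lemma key_interior {κ t₀ r₀ : ℝ} (hκ : 0 < κ) (ht₀ : t₀ ∈ Set.Ioo (0:ℝ) 1)
    {rt : ℝ → ℝ} (hrtC1 : ContDiffOn ℝ 1 rt (Set.Icc 0 t₀))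
    {Ub Vb : ℝ × ℝ → ℝ}
    (hUC1 : ContDiffOn ℝ 1 Ub (region κ t₀ r₀ rt))
    (hVC1 : ContDiffOn ℝ 1 Vb (region κ t₀ r₀ rt))
    (hsys : Sys38 κ Ub Vb (region κ t₀ r₀ rt))
    {C₁ C₂ C₃ : ℝ}
    (hC₁ : ∀ p ∈ region κ t₀ r₀ rt, |Ub p| ≤ C₁ ∧ |Vb p| ≤ C₁)
    (hC₂ : ∀ p ∈ region κ t₀ r₀ rt, |p.1 * pdr Vb p| ≤ C₂)
    (hC₃ : ∀ t ∈ Set.Ioc (0:ℝ) t₀, |(Ub (t, rt t) - Vb (t, rt t)) / t| ≤ C₃)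
    {a b : ℝ} (ha : 0 < a) (hat : a < t₀) (hb1 : rt a < b) (hb2 : b < rcheck κ t₀ r₀ a) :
    |Ub (a, b) - Vb (a, b)| ≤
      (max C₃ (2*C₁/t₀) + ((2*C₁*t₀^2 + 2*C₂)/((1-t₀^2)*(κ+1-t₀^2)))*t₀) * a := by
  have ht₀p : 0 < t₀ := ht₀.1
  have ht₀1 : t₀ < 1 := ht₀.2
  have hab : ((a, b) : ℝ × ℝ) ∈ region κ t₀ r₀ rt :=
    ⟨ha, le_of_lt hat, le_of_lt hb1, le_of_lt hb2⟩
  have tri : ∀ x y : ℝ, |x - y| ≤ |x| + |y| := fun x y => abs_sub x y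
  have hC₁0 : 0 ≤ C₁ := le_trans (abs_nonneg _) (hC₁ _ hab).1
  have hC₂0 : 0 ≤ C₂ := le_trans (abs_nonneg _) (hC₂ _ hab)
  set Fm : ℝ := (1 - t₀^2) * (κ + 1 - t₀^2) with hFm
  have hFmpos : 0 < Fm := by
    have h1 : t₀^2 < 1 := by nlinarith
    rw [hFm]; exact mul_pos (by linarith) (by linarith)
  set K : ℝ := (2*C₁*t₀^2 + 2*C₂)/Fm with hK
  have hK0 : 0 ≤ K := div_nonneg (by nlinarith) hFmpos.le
  set B₀ : ℝ := max C₃ (2*C₁/t₀) with hB₀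
  set R : ℝ → ℝ := fun s => b + ∫ x in a..s, lam κ x with hR
  have haIcc : a ∈ Icc (0:ℝ) t₀ := ⟨ha.le, hat.le⟩
  have hRd : ∀ u ∈ Icc (0:ℝ) t₀, HasDerivAt R (lam κ u) u := by
    intro u hu
    have h := intervalIntegral.integral_hasDerivAt_right (lam_ii hκ ht₀ haIcc hu)
      (lam_smaf κ _) (lam_contAt_s6 hκ (sq_lt_one_of_mem ht₀ hu))
    simpa [hR] using h.const_add b
  have hRa : R a = b := by simp [hR]
  have hRrel : ∀ s ∈ Icc a t₀, R s = rcheck κ t₀ r₀ s + (b - rcheck κ t₀ r₀ a) := by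
    intro s hs
    have hsIcc : s ∈ Icc (0:ℝ) t₀ := ⟨le_trans ha.le hs.1, hs.2⟩
    have hadd := intervalIntegral.integral_add_adjacent_intervals
      (lam_ii hκ ht₀ haIcc hsIcc) (lam_ii hκ ht₀ hsIcc ⟨ht₀p.le, le_rfl⟩)
    simp only [hR, rcheck]
    linarith [hadd]
  have hRlt : ∀ s ∈ Icc a t₀, R s < rcheck κ t₀ r₀ s := fun s hs => by
    rw [hRrel s hs]; linarith
  have hRcont : ContinuousOn R (Icc a t₀) := fun s hs =>
    ((hRd s ⟨le_trans ha.le hs.1, hs.2⟩).continuousAt).continuousWithinAt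
  have hrtcont : ContinuousOn rt (Icc a t₀) :=
    hrtC1.continuousOn.mono (Icc_subset_Icc ha.le le_rfl)
  obtain ⟨s₁, hs₁a, hs₁t, hs₁lt, hs₁ge, hs₁bd⟩ :
      ∃ s₁, a < s₁ ∧ s₁ ≤ t₀ ∧ (∀ u, a ≤ u → u < s₁ → rt u < R u) ∧ rt s₁ ≤ R s₁ ∧
        |Ub (s₁, R s₁) - Vb (s₁, R s₁)| / s₁ ≤ B₀ := by
    by_cases hA : ∃ s ∈ Icc a t₀, R s - rt s ≤ 0
    · set A : Set ℝ := Icc a t₀ ∩ (fun s => R s - rt s) ⁻¹' Iic 0 with hAdef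
      have hAclosed : IsClosed A :=
        ContinuousOn.preimage_isClosed_of_isClosed (hRcont.sub hrtcont) isClosed_Icc isClosed_Iic
      have hAne : A.Nonempty := by
        obtain ⟨s, hs1, hs2⟩ := hA
        exact ⟨s, hs1, hs2⟩
      have hAbdd : BddBelow A := bddBelow_Icc.mono Set.inter_subset_left
      set s₁ := sInf A with hs₁def
      have hs₁A : s₁ ∈ A := hAclosed.csInf_mem hAne hAbdd
      have hs₁Icc : s₁ ∈ Icc a t₀ := hs₁A.1
      have hna : (a : ℝ) ∉ A := by
        intro h
        have h2 : R a - rt a ≤ 0 := h.2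
        rw [hRa] at h2
        linarith
      have hs₁gta : a < s₁ := lt_of_le_of_ne hs₁Icc.1 (fun h => hna (h ▸ hs₁A))
      have haspos : 0 < s₁ := lt_trans ha hs₁gta
      have hlt : ∀ u, a ≤ u → u < s₁ → rt u < R u := by
        intro u hu1 hu2
        by_contra hcon
        push_neg at hcon
        have huA : u ∈ A := ⟨⟨hu1, le_trans hu2.le hs₁Icc.2⟩, by
          simp only [Set.mem_preimage, Set.mem_Iic]; linarith⟩
        exact absurd (csInf_le hAbdd huA) (not_le.mpr hu2)
      haveI hNB : (𝓝[Ico a s₁] s₁).NeBot := by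
        apply mem_closure_iff_nhdsWithin_neBot.mp
        rw [closure_Ico (ne_of_lt hs₁gta)]
        exact ⟨hs₁gta.le, le_rfl⟩
      have hge : rt s₁ ≤ R s₁ := by
        have hcw : ContinuousWithinAt (fun s => R s - rt s) (Ico a s₁) s₁ :=
          ((hRcont.sub hrtcont) s₁ hs₁Icc).mono
            (fun x hx => ⟨hx.1, le_trans hx.2.le hs₁Icc.2⟩)
        have h0 : (0:ℝ) ≤ R s₁ - rt s₁ := by
          apply ge_of_tendsto hcw
          filter_upwards [self_mem_nhdsWithin] with u hu
          have := hlt u hu.1 hu.2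
          linarith
        linarith
      have hle' : R s₁ - rt s₁ ≤ 0 := hs₁A.2
      have heq : R s₁ = rt s₁ := by linarith
      refine ⟨s₁, hs₁gta, hs₁Icc.2, hlt, hge, ?_⟩
      have h3 := hC₃ s₁ ⟨haspos, hs₁Icc.2⟩
      rw [heq]
      rw [abs_div, abs_of_pos haspos] at h3
      exact le_trans h3 (le_max_left _ _)
    · push_neg at hA
      refine ⟨t₀, hat, le_rfl, ?_, ?_, ?_⟩
      · intro u hu1 hu2
        have := hA u ⟨hu1, hu2.le⟩
        linarith
      · have := hA t₀ ⟨hat.le, le_rfl⟩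
        linarith
      · have hmem : ((t₀, R t₀) : ℝ × ℝ) ∈ region κ t₀ r₀ rt :=
          ⟨ht₀p, le_rfl, by have := hA t₀ ⟨hat.le, le_rfl⟩; linarith,
            (hRlt t₀ ⟨hat.le, le_rfl⟩).le⟩
        have h1 := (hC₁ _ hmem).1
        have h2 := (hC₁ _ hmem).2
        have habs : |Ub (t₀, R t₀) - Vb (t₀, R t₀)| ≤ 2*C₁ := by
          have := tri (Ub (t₀, R t₀)) (Vb (t₀, R t₀)); linarith
        have hdiv : |Ub (t₀, R t₀) - Vb (t₀, R t₀)| / t₀ ≤ 2*C₁/t₀ :=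
          (div_le_div_iff_of_pos_right ht₀p).mpr habs
        exact hdiv.trans (le_max_right _ _)
  have haspos : 0 < s₁ := lt_trans ha hs₁a
  have hcurveΩ : ∀ u ∈ Icc a s₁, ((u, R u) : ℝ × ℝ) ∈ region κ t₀ r₀ rt := by
    intro u hu
    have huI : u ∈ Icc a t₀ := ⟨hu.1, hu.2.trans hs₁t⟩
    refine ⟨lt_of_lt_of_le ha hu.1, huI.2, ?_, (hRlt u huI).le⟩
    rcases lt_or_eq_of_le hu.2 with h | h
    · exact (hs₁lt u hu.1 h).le
    · rw [h]; exact hs₁ge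
  set D : ℝ → ℝ := fun u =>
    u^2/((1-u^2)*(κ+1-u^2)) * (Ub (u, R u) - Vb (u, R u))
      - 2*Real.sqrt (1-u^2)/((1-u^2)*(κ+1-u^2)) * (u * pdr Vb (u, R u)) with hD
  have hstep : ∀ u, a ≤ u → u < s₁ →
      HasDerivAt (fun s => (Ub (s, R s) - Vb (s, R s)) / s) (D u) u ∧ |D u| ≤ K := by
    intro u hu1 hus₁
    have hua : 0 < u := lt_of_lt_of_le ha hu1
    have hut₀ : u < t₀ := lt_of_lt_of_le hus₁ hs₁t
    have huI : u ∈ Icc (0:ℝ) t₀ := ⟨hua.le, hut₀.le⟩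
    have hu2lt1 : u^2 < 1 := sq_lt_one_of_mem ht₀ huI
    have hrtu : rt u < R u := hs₁lt u hu1 hus₁
    have hRu : R u < rcheck κ t₀ r₀ u := hRlt u ⟨hu1, hut₀.le⟩
    have hquΩ : ((u, R u) : ℝ × ℝ) ∈ region κ t₀ r₀ rt := ⟨hua, hut₀.le, hrtu.le, hRu.le⟩
    have hnhds : region κ t₀ r₀ rt ∈ 𝓝 ((u, R u) : ℝ × ℝ) :=
      region_mem_nhds hκ ht₀ hrtC1 hua hut₀ hrtu hRu
    have hUd : DifferentiableAt ℝ Ub (u, R u) :=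
      ((hUC1.differentiableOn one_ne_zero) _ hquΩ).differentiableAt hnhds
    have hVd : DifferentiableAt ℝ Vb (u, R u) :=
      ((hVC1.differentiableOn one_ne_zero) _ hquΩ).differentiableAt hnhds
    have hcurve : HasDerivAt (fun s => ((s, R s) : ℝ × ℝ)) ((1:ℝ), lam κ u) u :=
      (hasDerivAt_id u).prodMk (hRd u huI)
    have hzU : HasDerivAt (fun s => Ub (s, R s)) (fderiv ℝ Ub (u, R u) (1, lam κ u)) u :=
      hUd.hasFDerivAt.comp_hasDerivAt u hcurve
    have hzV : HasDerivAt (fun s => Vb (s, R s)) (fderiv ℝ Vb (u, R u) (1, lam κ u)) u :=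
      hVd.hasFDerivAt.comp_hasDerivAt u hcurve
    have hzd : HasDerivAt (fun s => Ub (s, R s) - Vb (s, R s))
        (fderiv ℝ Ub (u, R u) (1, lam κ u) - fderiv ℝ Vb (u, R u) (1, lam κ u)) u :=
      hzU.sub hzV
    have hφd : HasDerivAt (fun s => (Ub (s, R s) - Vb (s, R s)) / s)
        (((fderiv ℝ Ub (u, R u) (1, lam κ u) - fderiv ℝ Vb (u, R u) (1, lam κ u)) * u
          - (Ub (u, R u) - Vb (u, R u)) * 1) / u ^ 2) u :=
      hzd.div (hasDerivAt_id' u) hua.ne'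
    have hap : ∀ (L : ℝ × ℝ →L[ℝ] ℝ) (c : ℝ), L (1, c) = L (1, 0) + c * L (0, 1) := by
      intro L c
      have hsplit : ((1:ℝ), c) = ((1:ℝ), (0:ℝ)) + c • ((0:ℝ), (1:ℝ)) := by
        simp [Prod.ext_iff]
      rw [hsplit, map_add, ContinuousLinearMap.map_smul, smul_eq_mul]
    obtain ⟨e1, e2⟩ := hsys _ hquΩ
    simp only [pdt, pdr] at e1 e2
    have hFne1 : (1 - u^2) ≠ 0 := by nlinarith
    have hFne2 : (κ + 1 - u^2) ≠ 0 := by nlinarith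
    have hDeq : ((fderiv ℝ Ub (u, R u) (1, lam κ u) - fderiv ℝ Vb (u, R u) (1, lam κ u)) * u
          - (Ub (u, R u) - Vb (u, R u)) * 1) / u ^ 2 = D u := by
      rw [hap (fderiv ℝ Ub (u, R u)) (lam κ u), hap (fderiv ℝ Vb (u, R u)) (lam κ u)]
      simp only [lam] at e1 e2 ⊢
      rw [hD]
      exact alg_main hua.ne' hFne1 hFne2 e1 e2
    rw [hDeq] at hφd
    refine ⟨hφd, ?_⟩
    have hp1 : 0 < 1 - u^2 := by nlinarith
    have hp2 : 0 < κ + 1 - u^2 := by nlinarith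
    have hu2 : u^2 ≤ t₀^2 := by nlinarith
    have hFuge : Fm ≤ (1-u^2)*(κ+1-u^2) := by
      nlinarith [mul_nonneg (sub_nonneg.2 hu2) hp2.le,
        mul_nonneg (by nlinarith : (0:ℝ) ≤ 1 - t₀^2) (sub_nonneg.2 hu2)]
    have hzb : |Ub (u, R u) - Vb (u, R u)| ≤ 2*C₁ := by
      have h1 := (hC₁ _ hquΩ).1
      have h2 := (hC₁ _ hquΩ).2
      have := tri (Ub (u, R u)) (Vb (u, R u)); linarith
    have hpv : |u * pdr Vb (u, R u)| ≤ C₂ := hC₂ _ hquΩ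
    have hsq0 : 0 ≤ Real.sqrt (1 - u^2) := Real.sqrt_nonneg _
    have hsq : Real.sqrt (1 - u^2) ≤ 1 := Real.sqrt_le_one.mpr (by nlinarith)
    have hcoef1 : u^2/((1-u^2)*(κ+1-u^2)) ≤ t₀^2/Fm :=
      div_le_div₀ (sq_nonneg t₀) hu2 hFmpos hFuge
    have hcoef2 : 2*Real.sqrt (1-u^2)/((1-u^2)*(κ+1-u^2)) ≤ 2/Fm :=
      div_le_div₀ (by norm_num) (by linarith) hFmpos hFuge
    have hcoef1' : (0:ℝ) ≤ u^2/((1-u^2)*(κ+1-u^2)) :=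
      div_nonneg (sq_nonneg u) (by positivity)
    have hcoef2' : (0:ℝ) ≤ 2*Real.sqrt (1-u^2)/((1-u^2)*(κ+1-u^2)) :=
      div_nonneg (by positivity) (by positivity)
    calc |D u| ≤ |u^2/((1-u^2)*(κ+1-u^2)) * (Ub (u, R u) - Vb (u, R u))|
          + |2*Real.sqrt (1-u^2)/((1-u^2)*(κ+1-u^2)) * (u * pdr Vb (u, R u))| := by
          rw [hD]; exact tri _ _
      _ = u^2/((1-u^2)*(κ+1-u^2)) * |Ub (u, R u) - Vb (u, R u)|
          + 2*Real.sqrt (1-u^2)/((1-u^2)*(κ+1-u^2)) * |u * pdr Vb (u, R u)| := by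
          rw [abs_mul, abs_mul, abs_of_nonneg hcoef1', abs_of_nonneg hcoef2']
      _ ≤ t₀^2/Fm * (2*C₁) + 2/Fm * C₂ := by
          apply add_le_add
          · exact mul_le_mul hcoef1 hzb (abs_nonneg _) (by positivity)
          · exact mul_le_mul hcoef2 hpv (abs_nonneg _) (by positivity)
      _ = K := by rw [hK]; field_simp
  have lip : ∀ s', a < s' → s' < s₁ →
      |(Ub (a, R a) - Vb (a, R a)) / a| ≤ |(Ub (s', R s') - Vb (s', R s')) / s'| + K * (s' - a) := by
    intro s' hs'a hs's
    have hmvt := Convex.norm_image_sub_le_of_norm_hasDerivWithin_le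
      (f := fun s => (Ub (s, R s) - Vb (s, R s)) / s) (f' := D) (C := K) (s := Icc a s')
      (fun u hu => ((hstep u hu.1 (lt_of_le_of_lt hu.2 hs's)).1).hasDerivWithinAt)
      (fun u hu => by
        have := (hstep u hu.1 (lt_of_le_of_lt hu.2 hs's)).2
        simpa using this)
      (convex_Icc a s') (Set.left_mem_Icc.2 hs'a.le) (Set.right_mem_Icc.2 hs'a.le)
    rw [Real.norm_eq_abs, Real.norm_eq_abs] at hmvt
    have h1 := abs_sub_abs_le_abs_sub ((Ub (a, R a) - Vb (a, R a)) / a)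
      ((Ub (s', R s') - Vb (s', R s')) / s')
    rw [abs_sub_comm] at h1
    have h2 : |s' - a| = s' - a := abs_of_pos (by linarith)
    rw [h2] at hmvt
    linarith
  haveI hNB : (𝓝[Ico a s₁] s₁).NeBot := by
    apply mem_closure_iff_nhdsWithin_neBot.mp
    rw [closure_Ico (ne_of_lt hs₁a)]
    exact ⟨hs₁a.le, le_rfl⟩
  have hγcont : ContinuousOn (fun s => ((s, R s) : ℝ × ℝ)) (Icc a s₁) :=
    continuousOn_id.prodMk (hRcont.mono (Icc_subset_Icc le_rfl hs₁t))
  have hzcont : ContinuousOn (fun s => (Ub (s, R s) - Vb (s, R s)) / s) (Icc a s₁) := by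
    apply ContinuousOn.div
    · exact ((hUC1.continuousOn.comp hγcont hcurveΩ).sub
        (hVC1.continuousOn.comp hγcont hcurveΩ))
    · exact continuousOn_id
    · intro x hx; exact (lt_of_lt_of_le ha hx.1).ne'
  have hφlim : ContinuousWithinAt
      (fun s => |(Ub (s, R s) - Vb (s, R s)) / s| + K * (s - a)) (Ico a s₁) s₁ := by
    apply ContinuousWithinAt.add
    · exact ((hzcont s₁ ⟨hs₁a.le, le_rfl⟩).mono
        (fun x hx => ⟨hx.1, hx.2.le⟩)).abs
    · exact ((continuous_const.mul (continuous_id.sub continuous_const)).continuousAt).continuousWithinAt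
  have hev : ∀ᶠ s' in 𝓝[Ico a s₁] s₁,
      |(Ub (a, R a) - Vb (a, R a)) / a| ≤
        |(Ub (s', R s') - Vb (s', R s')) / s'| + K * (s' - a) := by
    have hIoi : Ioi a ∈ 𝓝 s₁ := Ioi_mem_nhds hs₁a
    filter_upwards [self_mem_nhdsWithin, mem_nhdsWithin_of_mem_nhds hIoi] with s' h1 h2
    exact lip s' h2 h1.2
  have hfin : |(Ub (a, R a) - Vb (a, R a)) / a| ≤
      |(Ub (s₁, R s₁) - Vb (s₁, R s₁)) / s₁| + K * (s₁ - a) := ge_of_tendsto hφlim hev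
  have hBs₁ : |(Ub (s₁, R s₁) - Vb (s₁, R s₁)) / s₁| ≤ B₀ := by
    rw [abs_div, abs_of_pos haspos]
    exact hs₁bd
  have hKs : K * (s₁ - a) ≤ K * t₀ := by
    apply mul_le_mul_of_nonneg_left _ hK0
    linarith
  have hfinal : |(Ub (a, R a) - Vb (a, R a)) / a| ≤ B₀ + K * t₀ := by linarith
  rw [hRa, abs_div, abs_of_pos ha, div_le_iff₀ ha] at hfinal
  exact hfinal

lemma gap_pos {κ t₀ r₀ : ℝ} (hκ : 0 < κ) (ht₀ : t₀ ∈ Set.Ioo (0:ℝ) 1) {rt : ℝ → ℝ}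
    (hrtC1 : ContDiffOn ℝ 1 rt (Set.Icc 0 t₀)) (hrtt0 : rt t₀ = r₀)
    (hspace : ∀ t ∈ Set.Ioc (0:ℝ) t₀, lam κ t < deriv rt t)
    {t : ℝ} (ht : t ∈ Set.Ioo 0 t₀) : rt t < rcheck κ t₀ r₀ t := by
  set G : ℝ → ℝ := fun s => rt s - rcheck κ t₀ r₀ s with hG
  have hGc : ContinuousOn G (Set.Icc 0 t₀) :=
    (hrtC1.continuousOn).sub
      (fun u hu => (rcheck_hasDerivAt hκ ht₀ hu).continuousAt.continuousWithinAt)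
  have hmono : StrictMonoOn G (Set.Icc 0 t₀) := by
    apply strictMonoOn_of_deriv_pos (convex_Icc 0 t₀) hGc
    intro u hu
    rw [interior_Icc] at hu
    have hIcc : Set.Icc (0:ℝ) t₀ ∈ 𝓝 u := Icc_mem_nhds hu.1 hu.2
    have hrtd : DifferentiableAt ℝ rt u :=
      ((hrtC1.differentiableOn one_ne_zero) u ⟨le_of_lt hu.1, le_of_lt hu.2⟩).differentiableAt hIcc
    have hrcd := rcheck_hasDerivAt (r₀ := r₀) hκ ht₀ ⟨le_of_lt hu.1, le_of_lt hu.2⟩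
    rw [hG]
    rw [deriv_fun_sub hrtd hrcd.differentiableAt, hrcd.deriv]
    have := hspace u ⟨hu.1, le_of_lt hu.2⟩
    linarith
  have h1 : G t < G t₀ := hmono ⟨le_of_lt ht.1, le_of_lt ht.2⟩ ⟨le_of_lt ht₀.1, le_rfl⟩ ht.2
  have h2 : G t₀ = 0 := by
    simp [hG, rcheck, intervalIntegral.integral_same, hrtt0]
  have h3 : G t < 0 := by linarith
  simpa [hG, sub_neg] using h3

/-- Lemma 3.4 (uniform boundedness of the singular quotient W̄ = (Ū−V̄)/t). -/
theorem stmt_6 (κ t₀ r₀ : ℝ) (hκ : 0 < κ) (ht₀ : t₀ ∈ Set.Ioo (0:ℝ) 1)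
    (hr₀ : 0 < r₀) (rt : ℝ → ℝ)
    (hrtC1 : ContDiffOn ℝ 1 rt (Set.Icc 0 t₀))
    (hrtmono : StrictMonoOn rt (Set.Icc 0 t₀))
    (hrt0 : rt 0 = 0) (hrtt0 : rt t₀ = r₀)
    (hspace : ∀ t ∈ Set.Ioc (0:ℝ) t₀, lam κ t < deriv rt t)
    (Ub Vb : ℝ × ℝ → ℝ)
    (hUC1 : ContDiffOn ℝ 1 Ub (region κ t₀ r₀ rt))
    (hVC1 : ContDiffOn ℝ 1 Vb (region κ t₀ r₀ rt))
    (hsys : Sys38 κ Ub Vb (region κ t₀ r₀ rt))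
    (hUcont : ContinuousOn Ub (region κ t₀ r₀ rt ∪
      {p : ℝ × ℝ | ∃ t ∈ Set.Ioc (0:ℝ) t₀, p = (t, rt t)}))
    (hVcont : ContinuousOn Vb (region κ t₀ r₀ rt ∪
      {p : ℝ × ℝ | ∃ t ∈ Set.Ioc (0:ℝ) t₀, p = (t, rt t)}))
    (C₁ C₂ C₃ : ℝ)
    (hC₁ : ∀ p ∈ region κ t₀ r₀ rt, |Ub p| ≤ C₁ ∧ |Vb p| ≤ C₁)
    (hC₂ : ∀ p ∈ region κ t₀ r₀ rt, |p.1 * pdr Vb p| ≤ C₂)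
    (hC₃ : ∀ t ∈ Set.Ioc (0:ℝ) t₀, |(Ub (t, rt t) - Vb (t, rt t)) / t| ≤ C₃) :
    ∃ C : ℝ, ∀ p ∈ region κ t₀ r₀ rt, |Ub p - Vb p| ≤ C * p.1 := by
  have ht₀p : 0 < t₀ := ht₀.1
  refine ⟨max C₃ (2*C₁/t₀) + ((2*C₁*t₀^2 + 2*C₂)/((1-t₀^2)*(κ+1-t₀^2)))*t₀, ?_⟩
  rintro ⟨t, r⟩ hp
  obtain ⟨htp, htt₀, hrt1, hrt2⟩ := hp
  dsimp only at htp htt₀ hrt1 hrt2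
  have hpmem : ((t, r) : ℝ × ℝ) ∈ region κ t₀ r₀ rt := ⟨htp, htt₀, hrt1, hrt2⟩
  have hC₁0 : 0 ≤ C₁ := le_trans (abs_nonneg _) (hC₁ _ hpmem).1
  have hC₂0 : 0 ≤ C₂ := le_trans (abs_nonneg _) (hC₂ _ hpmem)
  have hFmpos : 0 < (1-t₀^2)*(κ+1-t₀^2) := by
    have h1 : t₀^2 < 1 := by nlinarith [ht₀.1, ht₀.2]
    exact mul_pos (by linarith) (by linarith)
  have hK0 : 0 ≤ (2*C₁*t₀^2 + 2*C₂)/((1-t₀^2)*(κ+1-t₀^2)) :=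
    div_nonneg (by nlinarith) hFmpos.le
  have tri : ∀ x y : ℝ, |x - y| ≤ |x| + |y| := fun x y => abs_sub x y
  rcases eq_or_lt_of_le htt₀ with heq | hlt
  · -- t = t₀
    have h1 := (hC₁ _ hpmem).1
    have h2 := (hC₁ _ hpmem).2
    have habs : |Ub (t, r) - Vb (t, r)| ≤ 2*C₁ := by
      have := tri (Ub (t, r)) (Vb (t, r)); linarith
    have hmax : 2*C₁/t₀ ≤ max C₃ (2*C₁/t₀) := le_max_right _ _
    have hid : (2*C₁/t₀)*t₀ = 2*C₁ := div_mul_cancel₀ _ ht₀p.ne'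
    have hKt : 0 ≤ ((2*C₁*t₀^2 + 2*C₂)/((1-t₀^2)*(κ+1-t₀^2)))*t₀ * t₀ :=
      mul_nonneg (mul_nonneg hK0 ht₀p.le) ht₀p.le
    have hmm : (2*C₁/t₀)*t₀ ≤ (max C₃ (2*C₁/t₀))*t₀ :=
      mul_le_mul_of_nonneg_right hmax ht₀p.le
    have heq' : t = t₀ := heq
    have hge : (max C₃ (2*C₁/t₀) + ((2*C₁*t₀^2 + 2*C₂)/((1-t₀^2)*(κ+1-t₀^2)))*t₀) * t
        = (max C₃ (2*C₁/t₀))*t₀ + ((2*C₁*t₀^2 + 2*C₂)/((1-t₀^2)*(κ+1-t₀^2)))*t₀*t₀ := by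
      rw [heq']; ring
    show |Ub (t, r) - Vb (t, r)| ≤ _ * t
    linarith [habs, hid, hKt, hmm, hge]
  · -- t < t₀
    have hgap : rt t < rcheck κ t₀ r₀ t :=
      gap_pos hκ ht₀ hrtC1 hrtt0 hspace ⟨htp, hlt⟩
    set m : ℝ := (rt t + rcheck κ t₀ r₀ t)/2 with hm
    have hseq : ∀ n : ℕ,
        rt t < r + (m - r) * (1/((n:ℝ)+1)) ∧ r + (m - r) * (1/((n:ℝ)+1)) < rcheck κ t₀ r₀ t := by
      intro n
      have hw1 : 0 < 1/((n:ℝ)+1) := by positivity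
      have hw2 : 1/((n:ℝ)+1) ≤ 1 := by
        rw [div_le_one (by positivity)]
        simp
      constructor
      · nlinarith [mul_nonneg (sub_nonneg.2 hrt1) (sub_nonneg.2 hw2),
          mul_pos (by linarith : (0:ℝ) < m - rt t) hw1]
      · nlinarith [mul_nonneg (sub_nonneg.2 hrt2) (sub_nonneg.2 hw2),
          mul_pos (by linarith : (0:ℝ) < rcheck κ t₀ r₀ t - m) hw1]
    have hbd : ∀ n : ℕ, |Ub (t, r + (m - r) * (1/((n:ℝ)+1))) - Vb (t, r + (m - r) * (1/((n:ℝ)+1)))|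
        ≤ (max C₃ (2*C₁/t₀) + ((2*C₁*t₀^2 + 2*C₂)/((1-t₀^2)*(κ+1-t₀^2)))*t₀) * t := by
      intro n
      exact key_interior hκ ht₀ hrtC1 hUC1 hVC1 hsys hC₁ hC₂ hC₃ htp hlt (hseq n).1 (hseq n).2
    have htendr : Filter.Tendsto (fun n : ℕ => r + (m - r) * (1/((n:ℝ)+1))) Filter.atTop (𝓝 r) := by
      have h0 : Filter.Tendsto (fun n : ℕ => 1/((n:ℝ)+1)) Filter.atTop (𝓝 0) :=
        tendsto_one_div_add_atTop_nhds_zero_nat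
      have h1 : Filter.Tendsto (fun n : ℕ => (m - r) * (1/((n:ℝ)+1))) Filter.atTop (𝓝 ((m-r)*0)) :=
        h0.const_mul (m - r)
      rw [mul_zero] at h1
      simpa using Filter.Tendsto.const_add r h1
    have htend : Filter.Tendsto (fun n : ℕ => ((t, r + (m - r) * (1/((n:ℝ)+1))) : ℝ × ℝ))
        Filter.atTop (𝓝[region κ t₀ r₀ rt] (t, r)) := by
      rw [tendsto_nhdsWithin_iff]
      constructor
      · exact Filter.Tendsto.prodMk_nhds tendsto_const_nhds htendr
      · filter_upwards with n
        exact ⟨htp, hlt.le, (hseq n).1.le, (hseq n).2.le⟩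
    have hUc : ContinuousWithinAt Ub (region κ t₀ r₀ rt) (t, r) := hUC1.continuousOn _ hpmem
    have hVc : ContinuousWithinAt Vb (region κ t₀ r₀ rt) (t, r) := hVC1.continuousOn _ hpmem
    have habs : Filter.Tendsto
        (fun n : ℕ => |Ub (t, r + (m - r) * (1/((n:ℝ)+1))) - Vb (t, r + (m - r) * (1/((n:ℝ)+1)))|)
        Filter.atTop (𝓝 |Ub (t, r) - Vb (t, r)|) :=
      ((hUc.tendsto.comp htend).sub (hVc.tendsto.comp htend)).abs
    exact le_of_tendsto habs (Filter.Eventually.of_forall hbd)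
end
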